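/- arXiv:2106.02129 — 3 statements merged into one kernel-verified Lean document; each statement's English description precedes it below -/
import Mathlib

section
/- Let (X,μ) be a probability space and let J, I, D be positive integers. Suppose g : X^J → ℝ can be written g = Σ_{i=1}^I g_i, where each g_i : X^J → ℝ is measurable, square-integrable with respect to the product measure μ^{⊗J}, and depends on at most D coordinates (i.e., there is a set S_i ⊆ [J] with |S_i| ≤ D such that g_i(x) = g_i(y) whenever x_j = y_j for all j ∈ S_i). Then D·Var_{μ^{⊗J}}(g) ≥ Σ_{j=1}^J ∫_{X^J} Var_j g dμ^{⊗J}, where for x ∈ X^J and j ∈ [J], E_j g(x) = ∫_X g(x^{j→z}) dμ(z) and Var_j g(x) = ∫_X (g(x^{j→z}) − E_j g(x))² dμ(z), with x^{j→z} denoting x with its j-th coordinate replaced by z. -/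
open MeasureTheory Finset Filter ProbabilityTheory

universe u

/-! ## k-SAT basics -/

/-- A `k`-SAT formula on `n` variables with `m` clauses: each clause is an ordered
`k`-tuple of literals, a literal being a pair (variable index, polarity). -/
abbrev Formula (n m k : ℕ) := Fin m → Fin k → Fin n × Bool

/-- An assignment satisfies a clause if some literal of the clause is satisfied. -/
def satClause {n k : ℕ} (x : Fin n → Bool) (C : Fin k → Fin n × Bool) : Prop :=
  ∃ j : Fin k, x (C j).1 = (C j).2

/-- Normalized Hamming distance. -/
noncomputable def hamΔ {n : ℕ} {α : Type*} (x y : Fin n → α) : ℝ :=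
  (Nat.card {i : Fin n // x i ≠ y i} : ℝ) / n

/-- `x` ν-satisfies `Φ` if it satisfies at least `(1-ν)m` clauses. -/
def nuSat {n m k : ℕ} (x : Fin n → Bool) (Φ : Formula n m k) (ν : ℝ) : Prop :=
  (1 - ν) * m ≤ (Nat.card {i : Fin m // satClause x (Φ i)} : ℝ)

/-- `x ∈ {T,F,err}^n` (η,ν)-satisfies `Φ` (`none` is the error symbol). -/
def etaNuSat {n m k : ℕ} (x : Fin n → Option Bool) (Φ : Formula n m k) (η ν : ℝ) : Prop :=
  ∃ y : Fin n → Bool, hamΔ x (fun i => some (y i)) ≤ η ∧ nuSat y Φ ν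

/-! ## polynomials and solving -/

/-- Index set for the one-hot encoding of a formula, of cardinality `N = 2knm`. -/
abbrev Coords (n m k : ℕ) := Fin m × Fin k × (Fin n × Bool)

/-- One-hot encoding of a formula as a vector in `ℝ^N`. -/
def encode {n m k : ℕ} (Φ : Formula n m k) : Coords n m k → ℝ :=
  fun p => if Φ p.1 p.2.1 = p.2.2 then 1 else 0

/-- `g` agrees with a real multivariate polynomial of total degree at most `D`. -/
def IsPolyDeg {σ : Type*} (D : ℕ) (g : (σ → ℝ) → ℝ) : Prop :=
  ∃ p : MvPolynomial σ ℝ, p.totalDegree ≤ D ∧ ∀ x, g x = MvPolynomial.eval x p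

/-- `f : ℝ^N → ℝ^n` is a (deterministic) degree-`D` polynomial. -/
def IsDegPoly (n m k D : ℕ) (f : (Coords n m k → ℝ) → Fin n → ℝ) : Prop :=
  ∀ i : Fin n, IsPolyDeg D (fun x => f x i)

open Classical in
/-- The rounding map: `T` if `x ≥ 1`, `F` if `x ≤ -1`, `err` otherwise. -/
noncomputable def roundR (x : ℝ) : Option Bool :=
  if 1 ≤ x then some true else if x ≤ -1 then some false else none

/-- Expectation over a uniformly random formula. -/
noncomputable def Eform (n m k : ℕ) (g : Formula n m k → ℝ) : ℝ :=
  (∑ Φ : Formula n m k, g Φ) / (Fintype.card (Formula n m k) : ℝ)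

open Classical in
/-- Probability over a uniformly random formula. -/
noncomputable def Pform (n m k : ℕ) (A : Formula n m k → Prop) : ℝ :=
  Eform n m k (fun Φ => if A Φ then 1 else 0)

/-- A deterministic degree-`D` polynomial `(δ,γ,η,ν)`-solves random `k`-SAT. -/
def DetSolves (n m k D : ℕ) (f : (Coords n m k → ℝ) → Fin n → ℝ) (δ γ η ν : ℝ) : Prop :=
  IsDegPoly n m k D f ∧
  1 - δ ≤ Pform n m k (fun Φ => etaNuSat (fun i => roundR (f (encode Φ) i)) Φ η ν) ∧
  Eform n m k (fun Φ => ∑ i, (f (encode Φ) i) ^ 2) ≤ γ * n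

/-- A random degree-`D` polynomial `(δ,γ,η,ν)`-solves random `k`-SAT: `μ` is a
probability measure, every slice is a degree-`D` polynomial with coefficients
measurable in `ω`, and the success-probability and normalization conditions hold. -/
def RandomSolves (n m k D : ℕ) {Ω : Type u} [MeasurableSpace Ω] (μ : Measure Ω)
    (f : (Coords n m k → ℝ) → Ω → Fin n → ℝ) (δ γ η ν : ℝ) : Prop :=
  IsProbabilityMeasure μ ∧
  (∀ ω : Ω, IsDegPoly n m k D (fun x => f x ω)) ∧
  (∀ (x : Coords n m k → ℝ) (i : Fin n), Measurable (fun ω => f x ω i)) ∧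
  (∀ Φ : Formula n m k, Integrable (fun ω => ∑ i, (f (encode Φ) ω i) ^ 2) μ) ∧
  1 - δ ≤ Eform n m k (fun Φ =>
      (μ {ω | etaNuSat (fun i => roundR (f (encode Φ) ω i)) Φ η ν}).toReal) ∧
  Eform n m k (fun Φ => ∫ ω, (∑ i, (f (encode Φ) ω i) ^ 2) ∂μ) ≤ γ * n

/-! ## κ* -/

noncomputable def iota (β : ℝ) : ℝ := β / (1 - β * Real.exp (-(β - 1)))

noncomputable def kappaStar : ℝ := sInf (iota '' Set.Ioi 1)

/-! ## overlap profiles and entropies -/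

/-- Binary entropy function (natural log, with `0·log 0 = 0`). -/
noncomputable def Hb (p : ℝ) : ℝ := Real.negMulLog p + Real.negMulLog (1 - p)

/-- Number of coordinates whose agreement pattern is exactly `σ`. -/
noncomputable def patCount {n ℓ : ℕ} (Y : Fin ℓ → Fin n → Bool) (σ : Fin ℓ → Bool) : ℕ :=
  Nat.card {i : Fin n // ∀ t, Y t i = σ t}

/-- Entry of the overlap profile indexed by the unordered partition `{σ⁻¹(T), σ⁻¹(F)}`. -/
noncomputable def profFrac {n ℓ : ℕ} (Y : Fin ℓ → Fin n → Bool) (σ : Fin ℓ → Bool) : ℝ :=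
  ((patCount Y σ : ℝ) + (patCount Y (fun t => !(σ t)) : ℝ)) / n

/-- Overlap entropy `H(π(Y))` (each unordered partition is counted twice in the sum,
hence the factor `1/2`; valid for `ℓ ≥ 1` assignments). -/
noncomputable def overlapEntropy {n ℓ : ℕ} (Y : Fin ℓ → Fin n → Bool) : ℝ :=
  (1/2) * ∑ σ : Fin ℓ → Bool, Real.negMulLog (profFrac Y σ)

/-- The fraction `λ_{S,T}` of coordinates in the agreement set at which `x` is true. -/
noncomputable def lamFrac {n ℓ : ℕ} (x : Fin n → Bool) (Y : Fin ℓ → Fin n → Bool)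
    (σ : Fin ℓ → Bool) : ℝ :=
  (Nat.card {i : Fin n // ((∀ t, Y t i = σ t) ∨ (∀ t, Y t i = !(σ t))) ∧ x i = true} : ℝ)
    / ((patCount Y σ : ℝ) + (patCount Y (fun t => !(σ t)) : ℝ))

/-- Conditional overlap entropy `H(π(x | Y))`. -/
noncomputable def condOverlapEntropy {n ℓ : ℕ} (x : Fin n → Bool)
    (Y : Fin ℓ → Fin n → Bool) : ℝ :=
  (1/2) * ∑ σ : Fin ℓ → Bool, profFrac Y σ * Hb (lamFrac x Y σ)

/-- `H(π(y^ℓ | y^0, …, y^{ℓ-1}))` for an `ℕ`-indexed family of assignments. -/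
noncomputable def condH {n : ℕ} (y : ℕ → Fin n → Bool) (ℓ : ℕ) : ℝ :=
  condOverlapEntropy (y ℓ) (fun t : Fin ℓ => y (t : ℕ))

/-- `H(π(y^0, …, y^k))`. -/
noncomputable def ovH {n : ℕ} (y : ℕ → Fin n → Bool) (k : ℕ) : ℝ :=
  overlapEntropy (fun t : Fin (k+1) => y (t : ℕ))

/-- The energy term `E_{I ~ unif([n]^k)} |{y^ℓ[I] : 0 ≤ ℓ ≤ k}|`. -/
noncomputable def energy {n : ℕ} (k : ℕ) (y : ℕ → Fin n → Bool) : ℝ :=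
  (∑ I : Fin k → Fin n,
      (((Finset.range (k+1)).image (fun ℓ => fun r => y ℓ (I r))).card : ℝ))
    / (Fintype.card (Fin k → Fin n) : ℝ)

/-- Conditional overlap entropies of `y^1, …, y^k` within `[β₋ log k / k, β₊ log k / k]`. -/
def Admissible {n : ℕ} (k : ℕ) (βm βp : ℝ) (y : ℕ → Fin n → Bool) : Prop :=
  ∀ ℓ, 1 ≤ ℓ → ℓ ≤ k →
    condH y ℓ ∈ Set.Icc (βm * Real.log k / k) (βp * Real.log k / k)

/-! ## the interpolation path -/

/-- The interpolation path: step `t+1` resamples the literal at lexicographic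
position `t % (km)` (0-indexed: clause `(t % km)/k`, position `(t % km) % k`)
to the value `w ⟨t, _⟩`. -/
def interpPath {n m k T : ℕ} (Φ0 : Formula n m k) (w : Fin T → Fin n × Bool) :
    ℕ → Formula n m k
  | 0 => Φ0
  | t + 1 => fun a b =>
      if h : t < T ∧ (a : ℕ) = t % (k * m) / k ∧ (b : ℕ) = t % (k * m) % k
      then w ⟨t, h.1⟩
      else interpPath Φ0 w t a b

open Classical in
/-- Probability of an event of the interpolation path `Φ^(0), …, Φ^(T)`, where
`Φ^(0)` is uniform and all resampled literals are i.i.d. uniform. -/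
noncomputable def Ppath (n m k T : ℕ) (A : (ℕ → Formula n m k) → Prop) : ℝ :=
  (∑ z : Formula n m k × (Fin T → Fin n × Bool),
      if A (interpPath z.1 z.2) then (1:ℝ) else 0)
    / (Fintype.card (Formula n m k × (Fin T → Fin n × Bool)) : ℝ)

/-! ## stability of low-degree polynomials -/

/-- The pair `(Φ, Φ')` is `c`-bad with respect to `f`. -/
def cBad {n m k : ℕ} (f : (Coords n m k → ℝ) → Fin n → ℝ) (c : ℝ)
    (Φ Φ' : Formula n m k) : Prop :=
  c * Eform n m k (fun Ψ => ∑ i, (f (encode Ψ) i) ^ 2) <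
    ∑ i, (f (encode Φ) i - f (encode Φ') i) ^ 2

/-- Replace the literal of `Φ` in clause `a`, position `b`, by `L`. -/
def updLit {n m k : ℕ} (Φ : Formula n m k) (a : Fin m) (b : Fin k)
    (L : Fin n × Bool) : Formula n m k :=
  fun i j => if i = a ∧ j = b then L else Φ i j

open Classical in
/-- `λ_j`: the probability that resampling the literal at clause `a`, position `b`
(uniformly among the `2n-1` other literals) produces a `c`-bad pair. -/
noncomputable def lambdaPos {n m k : ℕ} (f : (Coords n m k → ℝ) → Fin n → ℝ) (c : ℝ)
    (a : Fin m) (b : Fin k) : ℝ :=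
  (∑ Φ : Formula n m k, ∑ L : Fin n × Bool,
      if L ≠ Φ a b ∧ cBad f c Φ (updLit Φ a b L) then (1:ℝ) else 0)
    / ((Fintype.card (Formula n m k) : ℝ) * (2 * (n:ℝ) - 1))

/-! ## the p/q quantities of the energy analysis -/

/-- The history vector `y^{≤j}_i = (y^1_i, …, y^j_i)`. -/
def hist {n : ℕ} (y : ℕ → Fin n → Bool) (j : ℕ) (i : Fin n) : Fin j → Bool :=
  fun t => y ((t : ℕ) + 1) i

/-- `φ_ℓ(b | ξ) = P_{i ~ unif([n])}[y^ℓ_i = b | y^{≤ℓ-1}_i = ξ]`. -/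
noncomputable def phi {n : ℕ} (y : ℕ → Fin n → Bool) (ℓ : ℕ) (b : Bool)
    (ξ : Fin (ℓ - 1) → Bool) : ℝ :=
  (Nat.card {i : Fin n // y ℓ i = b ∧ hist y (ℓ - 1) i = ξ} : ℝ) /
    (Nat.card {i : Fin n // hist y (ℓ - 1) i = ξ} : ℝ)

open Classical in
/-- `p_ℓ(σ) = P_{I ~ unif([n]^k)}[y^{ℓ'}[I] = σ for some 0 ≤ ℓ' ≤ ℓ]`. -/
noncomputable def pP {n : ℕ} (k : ℕ) (y : ℕ → Fin n → Bool) (ℓ : ℕ)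
    (σ : Fin k → Bool) : ℝ :=
  (∑ I : Fin k → Fin n, if ∃ ℓ' ≤ ℓ, ∀ r, y ℓ' (I r) = σ r then (1:ℝ) else 0)
    / (Fintype.card (Fin k → Fin n) : ℝ)

open Classical in
/-- `Q_ℓ(σ, I)`: the truncated conditional probability that `y^ℓ[I] = σ`. -/
noncomputable def Qfun {n k : ℕ} (y : ℕ → Fin n → Bool) (ℓ : ℕ) (σ : Fin k → Bool)
    (I : Fin k → Fin n) : ℝ :=
  if (∏ r, phi y ℓ (σ r) (hist y (ℓ - 1) (I r))) ≤ 1 / ((k:ℝ) * Real.log k)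
  then ∏ r, phi y ℓ (σ r) (hist y (ℓ - 1) (I r)) else 0

/-- `q_ℓ(σ) = E_{I ~ unif([n]^k)}[Q_ℓ(σ, I)]`. -/
noncomputable def qfun {n k : ℕ} (y : ℕ → Fin n → Bool) (ℓ : ℕ) (σ : Fin k → Bool) : ℝ :=
  (∑ I : Fin k → Fin n, Qfun y ℓ σ I) / (Fintype.card (Fin k → Fin n) : ℝ)

/-! ## lazy random walk on a product graph -/

/-- Lazy random walk on `Σ^J`: step `t+1` resamples coordinate `σ (t+1)` to `u ⟨t, _⟩`. -/
def walk {S : Type u} {J : Type*} [DecidableEq J] {T : ℕ} (v0 : J → S) (σ : ℕ → J)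
    (u : Fin T → S) : ℕ → (J → S)
  | 0 => v0
  | t + 1 => if h : t < T then Function.update (walk v0 σ u t) (σ (t+1)) (u ⟨t, h⟩)
             else walk v0 σ u t

open Classical in
/-- `λ_j`: fraction of edges in direction `j` that are bad. -/
noncomputable def lambdaDir {S : Type u} [Fintype S] {J : ℕ}
    (B : (Fin J → S) → (Fin J → S) → Prop) (j : Fin J) : ℝ :=
  (∑ v : Fin J → S, ∑ s : S,
      if s ≠ v j ∧ B v (Function.update v j s) then (1:ℝ) else 0)
    / ((Fintype.card (Fin J → S) : ℝ) * ((Fintype.card S : ℝ) - 1))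

open Classical in
/-- Probability that no step of the lazy random walk traverses a bad edge. -/
noncomputable def PwalkGood {S : Type u} [Fintype S] (J T : ℕ)
    (B : (Fin J → S) → (Fin J → S) → Prop) (σ : ℕ → Fin J) : ℝ :=
  (∑ z : (Fin J → S) × (Fin T → S),
      if ∀ t, 1 ≤ t → t ≤ T →
          (walk z.1 σ z.2 t = walk z.1 σ z.2 (t-1) ∨
           ¬ B (walk z.1 σ z.2 (t-1)) (walk z.1 σ z.2 t))
      then (1:ℝ) else 0)
    / (Fintype.card ((Fin J → S) × (Fin T → S)) : ℝ)

/-! ## block interpolation -/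

/-- The index `i` of the segment `[s_i, s_{i+1})` containing `r`. -/
def psiIdx (s : ℕ → ℕ) (k r : ℕ) : ℕ := Nat.findGreatest (fun i => s i ≤ r) k

/-- `Ψ^ℓ`: concatenation of the blocks `ξ_i^{max(ℓ-i,0)}`, realized on the canonical
product space of `(k+1)²` independent `μ^{⊗M}`-samples. -/
def Psi {Υ : Type u} (s : ℕ → ℕ) (k M : ℕ)
    (ω : Fin (k+1) × Fin (k+1) → Fin M → Υ) (ℓ : ℕ) : Fin M → Υ :=
  fun r => ω (⟨min (psiIdx s k (r : ℕ)) k, by omega⟩,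
              ⟨min (ℓ - psiIdx s k (r : ℕ)) k, by omega⟩) r


namespace ES15
variable {X : Type u} [MeasurableSpace X] (μ : Measure X) [IsProbabilityMeasure μ] {J : ℕ}

/-- product measure -/
noncomputable def pp (J : ℕ) : Measure (Fin J → X) := Measure.pi fun _ => μ

instance : IsProbabilityMeasure (pp μ J) := by unfold pp; infer_instance

/-- merge: coordinates in T from second, else first -/
def mrg (T : Finset (Fin J)) (p : (Fin J → X) × (Fin J → X)) : Fin J → X :=
  fun l => if l ∈ T then p.2 l else p.1 l

lemma measurable_mrg (T : Finset (Fin J)) : Measurable (mrg (X := X) T) := by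
  apply measurable_pi_lambda
  intro l
  by_cases hl : l ∈ T
  · simpa [mrg, hl, Function.comp_def] using (measurable_pi_apply l).comp measurable_snd
  · simpa [mrg, hl, Function.comp_def] using (measurable_pi_apply l).comp measurable_fst

lemma map_mrg (T : Finset (Fin J)) :
    Measure.map (mrg T) ((pp μ J).prod (pp μ J)) = pp μ J := by
  rw [pp]
  refine (Measure.pi_eq (μ := fun _ => μ) fun s hs => ?_).symm
  rw [Measure.map_apply (measurable_mrg T) (MeasurableSet.univ_pi hs)]
  have hpre : mrg (X := X) T ⁻¹' (Set.pi Set.univ s) =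
      (Set.pi Set.univ fun l => if l ∈ T then Set.univ else s l) ×ˢ
      (Set.pi Set.univ fun l => if l ∈ T then s l else Set.univ) := by
    ext p
    simp only [Set.mem_preimage, Set.mem_pi, Set.mem_univ, forall_true_left, Set.mem_prod,
      mrg]
    constructor
    · intro h
      constructor <;> intro l <;> by_cases hl : l ∈ T <;> simp [hl] <;>
        simpa [hl] using h l
    · intro h l
      by_cases hl : l ∈ T
      · simpa [hl] using h.2 l
      · simpa [hl] using h.1 l
  rw [hpre, Measure.prod_prod]
  rw [Measure.pi_pi, Measure.pi_pi, ← Finset.prod_mul_distrib]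
  exact Finset.prod_congr rfl fun l _ => by by_cases hl : l ∈ T <;> simp [hl]

/-- marginal: eval j pushes pp to μ -/
lemma map_eval (j : Fin J) : Measure.map (fun y : Fin J → X => y j) (pp μ J) = μ := by
  ext s hs
  rw [Measure.map_apply (measurable_pi_apply j) hs]
  have : (fun y : Fin J → X => y j) ⁻¹' s = Set.pi Set.univ (fun l => if l = j then s else Set.univ) := by
    ext y
    simp only [Set.mem_preimage, Set.mem_pi, Set.mem_univ, forall_true_left]
    constructor
    · intro h l; by_cases hl : l = j <;> simp [hl, h]
    · intro h; simpa using h j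
  rw [this, pp, Measure.pi_pi]
  simp [apply_ite μ]

/-- update map pushes pp ⊗ μ to pp -/
lemma map_upd (j : Fin J) :
    Measure.map (fun q : (Fin J → X) × X => Function.update q.1 j q.2) ((pp μ J).prod μ)
      = pp μ J := by
  have hm : Measurable (fun q : (Fin J → X) × X => Function.update q.1 j q.2) := by
    apply measurable_pi_lambda
    intro l
    by_cases hl : l = j
    · subst hl; simpa using measurable_snd
    · simp only [Function.update_apply, if_neg hl]
      exact (measurable_pi_apply l).comp measurable_fst
  rw [pp]
  refine (Measure.pi_eq (μ := fun _ => μ) fun s hs => ?_).symm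
  rw [Measure.map_apply hm (MeasurableSet.univ_pi hs)]
  have hpre : (fun q : (Fin J → X) × X => Function.update q.1 j q.2) ⁻¹' (Set.pi Set.univ s) =
      (Set.pi Set.univ fun l => if l = j then Set.univ else s l) ×ˢ (s j) := by
    ext q
    simp only [Set.mem_preimage, Set.mem_pi, Set.mem_univ, forall_true_left, Set.mem_prod,
      Function.update_apply]
    constructor
    · intro h
      refine ⟨fun l => ?_, by simpa using h j⟩
      by_cases hl : l = j
      · simp [hl]
      · simpa [hl] using h l
    · intro h l
      by_cases hl : l = j
      · simpa [hl] using h.2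
      · simpa [hl] using h.1 l
  rw [hpre, Measure.prod_prod, Measure.pi_pi]
  have : μ (s j) = ∏ l : Fin J, (if l = j then μ (s j) else 1) := by simp
  rw [this, ← Finset.prod_mul_distrib]
  exact Finset.prod_congr rfl fun l _ => by by_cases hl : l = j <;> simp [hl]


section Comb
variable {κ : Type*} [DecidableEq κ]
lemma neg_one_sq_pow (n : ℕ) : (-1 : ℝ) ^ n * (-1) ^ n = 1 := by
  rw [← pow_add, ← two_mul, pow_mul]
  norm_num

/-- Möbius inversion on the powerset lattice -/
lemma mob_inversion : ∀ (T : Finset κ) (a : Finset κ → ℝ),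
    ∑ U ∈ T.powerset, ∑ W ∈ U.powerset, (-1 : ℝ) ^ (U.card + W.card) * a W = a T := by
  intro T
  induction T using Finset.induction_on with
  | empty => intro a; simp
  | @insert j T' hj ih =>
    intro a
    rw [Finset.sum_powerset_insert hj]
    have key : ∀ U ∈ T'.powerset,
        ∑ W ∈ (insert j U).powerset, (-1 : ℝ) ^ ((insert j U).card + W.card) * a W
        = -(∑ W ∈ U.powerset, (-1 : ℝ) ^ (U.card + W.card) * a W)
          + ∑ W ∈ U.powerset, (-1 : ℝ) ^ (U.card + W.card) * a (insert j W) := by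
      intro U hU
      have hjU : j ∉ U := fun h => hj (Finset.mem_powerset.1 hU h)
      rw [Finset.sum_powerset_insert hjU, Finset.card_insert_of_notMem hjU]
      congr 1
      · rw [← Finset.sum_neg_distrib]
        refine Finset.sum_congr rfl fun W _ => ?_
        rw [show U.card + 1 + W.card = (U.card + W.card) + 1 by ring, pow_succ]
        ring
      · refine Finset.sum_congr rfl fun W hW => ?_
        have hjW : j ∉ W := fun h => hjU (Finset.mem_powerset.1 hW h)
        rw [Finset.card_insert_of_notMem hjW,
          show U.card + 1 + (W.card + 1) = (U.card + W.card) + 2 by ring, pow_add]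
        norm_num
    rw [Finset.sum_congr rfl key, Finset.sum_add_distrib, Finset.sum_neg_distrib]
    have := ih (fun W => a (insert j W))
    rw [this]
    ring

/-- the collapse lemma -/
lemma collapse : ∀ (U : Finset κ) (a : Finset κ → ℝ) (W : Finset κ), W ⊆ U →
    ∑ W' ∈ U.powerset, (-1 : ℝ) ^ W'.card * a (W ∩ W')
      = if W = U then ∑ V ∈ U.powerset, (-1 : ℝ) ^ V.card * a V else 0 := by
  intro U
  induction U using Finset.induction_on with
  | empty =>
    intro a W hW
    rw [Finset.subset_empty] at hW
    subst hW
    simp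
  | @insert j U' hj ih =>
    intro a W hW
    rw [Finset.sum_powerset_insert hj]
    by_cases hjW : j ∈ W
    · set W₀ := W.erase j with hW₀
      have hW₀U : W₀ ⊆ U' := by
        intro x hx
        have hxW := Finset.mem_of_mem_erase hx
        have hxj := Finset.ne_of_mem_erase hx
        rcases Finset.mem_insert.1 (hW hxW) with h | h
        · exact absurd h hxj
        · exact h
      have hWid : W = insert j W₀ := (Finset.insert_erase hjW).symm
      have e1 : ∀ W' ∈ U'.powerset, W ∩ W' = W₀ ∩ W' := by
        intro W' hW'
        have hjW' : j ∉ W' := fun h => hj (Finset.mem_powerset.1 hW' h)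
        ext x
        simp only [Finset.mem_inter, hW₀, Finset.mem_erase]
        constructor
        · rintro ⟨h1, h2⟩
          exact ⟨⟨fun hx => hjW' (hx ▸ h2), h1⟩, h2⟩
        · rintro ⟨⟨_, h1⟩, h2⟩
          exact ⟨h1, h2⟩
      have e2 : ∀ W' ∈ U'.powerset, W ∩ insert j W' = insert j (W₀ ∩ W') := by
        intro W' hW'
        have hjW' : j ∉ W' := fun h => hj (Finset.mem_powerset.1 hW' h)
        ext x
        simp only [Finset.mem_inter, Finset.mem_insert, hW₀, Finset.mem_erase]
        constructor
        · rintro ⟨h1, h2 | h2⟩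
          · exact Or.inl h2
          · exact Or.inr ⟨⟨fun hx => hjW' (hx ▸ h2), h1⟩, h2⟩
        · rintro (h | ⟨⟨hne, h1⟩, h2⟩)
          · exact ⟨h ▸ hjW, Or.inl h⟩
          · exact ⟨h1, Or.inr h2⟩
      have hsum : ∑ W' ∈ U'.powerset, (-1 : ℝ) ^ W'.card * a (W ∩ W')
            + ∑ W' ∈ U'.powerset, (-1 : ℝ) ^ (insert j W').card * a (W ∩ insert j W')
          = ∑ W' ∈ U'.powerset, (-1 : ℝ) ^ W'.card
              * ((fun V => a V - a (insert j V)) (W₀ ∩ W')) := by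
        rw [← Finset.sum_add_distrib]
        refine Finset.sum_congr rfl fun W' hW' => ?_
        have hjW' : j ∉ W' := fun h => hj (Finset.mem_powerset.1 hW' h)
        rw [e1 W' hW', e2 W' hW', Finset.card_insert_of_notMem hjW', pow_succ]
        ring
      rw [hsum, ih (fun V => a V - a (insert j V)) W₀ hW₀U]
      have hiff : W₀ = U' ↔ W = insert j U' := by
        constructor
        · intro h; rw [hWid, h]
        · intro h
          rw [hW₀, h, Finset.erase_insert hj]
      by_cases hcase : W₀ = U'
      · rw [if_pos hcase, if_pos (hiff.1 hcase), Finset.sum_powerset_insert hj,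
          ← Finset.sum_add_distrib]
        refine Finset.sum_congr rfl fun V hV => ?_
        have hjV : j ∉ V := fun h => hj (Finset.mem_powerset.1 hV h)
        rw [Finset.card_insert_of_notMem hjV, pow_succ]
        ring
      · rw [if_neg hcase, if_neg (fun h => hcase (hiff.2 h))]
    · -- j ∉ W
      have hWU' : W ⊆ U' := by
        intro x hx
        rcases Finset.mem_insert.1 (hW hx) with h | h
        · exact absurd (h ▸ hx) hjW
        · exact h
      have e3 : ∀ W' ∈ U'.powerset, W ∩ insert j W' = W ∩ W' := by
        intro W' _
        ext x
        simp only [Finset.mem_inter, Finset.mem_insert]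
        constructor
        · rintro ⟨h1, h2 | h2⟩
          · exact absurd (h2 ▸ h1) hjW
          · exact ⟨h1, h2⟩
        · rintro ⟨h1, h2⟩; exact ⟨h1, Or.inr h2⟩
      have : ∑ W' ∈ U'.powerset, (-1 : ℝ) ^ (insert j W').card * a (W ∩ insert j W')
          = -∑ W' ∈ U'.powerset, (-1 : ℝ) ^ W'.card * a (W ∩ W') := by
        rw [← Finset.sum_neg_distrib]
        refine Finset.sum_congr rfl fun W' hW' => ?_
        have hjW' : j ∉ W' := fun h => hj (Finset.mem_powerset.1 hW' h)
        rw [e3 W' hW', Finset.card_insert_of_notMem hjW', pow_succ]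
        ring
      rw [this, add_neg_cancel, if_neg (fun h => hjW (by rw [h]; exact Finset.mem_insert_self j U'))]

end Comb

variable {μ}

/-- integrability of compositions with mrg -/
lemma integrable_comp_mrg {f : (Fin J → X) → ℝ} (hm : Measurable f)
    (hf : Integrable f (pp μ J)) (T : Finset (Fin J)) :
    Integrable (fun p => f (mrg T p)) ((pp μ J).prod (pp μ J)) := by
  rw [← map_mrg μ T] at hf
  exact (integrable_map_measure (by rw [map_mrg μ T]; exact hm.aestronglyMeasurable)
    (measurable_mrg T).aemeasurable).mp hf

lemma integral_comp_mrg {f : (Fin J → X) → ℝ} (hm : Measurable f) (T : Finset (Fin J)) :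
    ∫ p, f (mrg T p) ∂((pp μ J).prod (pp μ J)) = ∫ x, f x ∂(pp μ J) := by
  conv_rhs => rw [← map_mrg μ T]
  exact (integral_map (measurable_mrg T).aemeasurable
    (by rw [map_mrg μ T]; exact hm.aestronglyMeasurable)).symm

noncomputable def avg (T : Finset (Fin J)) (f : (Fin J → X) → ℝ) : (Fin J → X) → ℝ :=
  fun x => ∫ y, f (mrg T (x, y)) ∂(pp μ J)

lemma measurable_avg {f : (Fin J → X) → ℝ} (hm : Measurable f) (T : Finset (Fin J)) :
    Measurable (avg (μ := μ) T f) :=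
  (StronglyMeasurable.integral_prod_right'
    (f := fun p => f (mrg T p)) ((hm.comp (measurable_mrg T)).stronglyMeasurable)).measurable

/-- Jensen: square of integral ≤ integral of square, for probability measures -/
lemma sq_int_le {α : Type*} [MeasurableSpace α] {ν : Measure α} [IsProbabilityMeasure ν]
    {u : α → ℝ} (hm : AEStronglyMeasurable u ν) (h2 : Integrable (fun y => u y ^ 2) ν) :
    (∫ y, u y ∂ν) ^ 2 ≤ ∫ y, u y ^ 2 ∂ν := by
  have hu : MemLp u 2 ν := (memLp_two_iff_integrable_sq hm).2 h2
  have hv := ProbabilityTheory.variance_nonneg u ν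
  rw [ProbabilityTheory.variance_eq_sub hu] at hv
  have : ∫ y, u y ^ 2 ∂ν = ∫ y, (u ^ 2) y ∂ν := by simp [Pi.pow_apply]
  linarith [hv]

lemma memℒp_avg {f : (Fin J → X) → ℝ} (hm : Measurable f) (hf : MemLp f 2 (pp μ J))
    (T : Finset (Fin J)) : MemLp (avg (μ := μ) T f) 2 (pp μ J) := by
  have hsq : Integrable (fun p => f (mrg T p) ^ 2) ((pp μ J).prod (pp μ J)) :=
    integrable_comp_mrg (hm.pow_const 2) hf.integrable_sq T
  have hbound : Integrable (fun x => ∫ y, f (mrg T (x, y)) ^ 2 ∂(pp μ J)) (pp μ J) :=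
    hsq.integral_prod_left
  have hae : ∀ᵐ x ∂(pp μ J), (avg (μ := μ) T f x) ^ 2 ≤ ∫ y, f (mrg T (x, y)) ^ 2 ∂(pp μ J) := by
    filter_upwards [hsq.prod_right_ae] with x hx
    exact sq_int_le ((hm.comp ((measurable_mrg T).comp measurable_prodMk_left)).aestronglyMeasurable) hx
  refine (memLp_two_iff_integrable_sq (measurable_avg hm T).aestronglyMeasurable).2 ?_
  refine hbound.mono' ((measurable_avg hm T).pow_const 2).aestronglyMeasurable ?_
  filter_upwards [hae] with x hx
  rw [Real.norm_eq_abs, abs_of_nonneg (sq_nonneg _)]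
  exact hx

/-- products of L² functions are integrable -/
lemma integrable_mul {f h : (Fin J → X) → ℝ} (hfm : Measurable f) (hhm : Measurable h)
    (hf : MemLp f 2 (pp μ J)) (hh : MemLp h 2 (pp μ J)) :
    Integrable (fun x => f x * h x) (pp μ J) := by
  refine (hf.integrable_sq.add hh.integrable_sq).mono'
    (hfm.mul hhm).aestronglyMeasurable (ae_of_all _ fun x => ?_)
  rw [Real.norm_eq_abs, abs_mul]
  simp only [Pi.add_apply]
  nlinarith [sq_nonneg (|f x| - |h x|), sq_abs (f x), sq_abs (h x), abs_nonneg (f x), abs_nonneg (h x)]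


/-- pull-out lemma: if `u` doesn't depend on coordinates in `T` then
`∫ u·h = ∫ u·(avg T h)`. -/
lemma pull_out {u h : (Fin J → X) → ℝ} (T : Finset (Fin J))
    (hum : Measurable u) (hhm : Measurable h)
    (hint : Integrable (fun x => u x * h x) (pp μ J))
    (hdep : ∀ p, u (mrg T p) = u p.1) :
    ∫ x, u x * h x ∂(pp μ J) = ∫ x, u x * avg (μ := μ) T h x ∂(pp μ J) := by
  have h1 : ∫ x, u x * h x ∂(pp μ J)
      = ∫ p, u (mrg T p) * h (mrg T p) ∂((pp μ J).prod (pp μ J)) :=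
    (integral_comp_mrg (hum.mul hhm) T).symm
  have h2 : (fun p : (Fin J → X) × (Fin J → X) => u (mrg T p) * h (mrg T p))
      = fun p => u p.1 * h (mrg T p) := funext fun p => by rw [hdep]
  have hint2 : Integrable (fun p => u p.1 * h (mrg T p)) ((pp μ J).prod (pp μ J)) := by
    rw [← h2]; exact integrable_comp_mrg (hum.mul hhm) hint T
  rw [h1, h2, integral_prod _ hint2]
  refine integral_congr_ae (ae_of_all _ fun x => ?_)
  show ∫ y, u x * h (mrg T (x, y)) ∂(pp μ J) = u x * avg (μ := μ) T h x
  exact integral_const_mul _ _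

/-- key pointwise composition identity -/
lemma mrg_mrg (P Q : Finset (Fin J)) (x y z : Fin J → X) :
    mrg Q (mrg P (x, y), z) = mrg (P ∪ Q) (x, mrg Q (y, z)) := by
  funext l
  by_cases hq : l ∈ Q
  · simp [mrg, hq]
  · by_cases hp : l ∈ P <;> simp [mrg, hq, hp]

/-- semigroup property of averaging, a.e. -/
lemma avg_avg {f : (Fin J → X) → ℝ} (hm : Measurable f) (hf : Integrable f (pp μ J))
    (P Q : Finset (Fin J)) :
    avg (μ := μ) P (avg (μ := μ) Q f) =ᵐ[pp μ J] avg (μ := μ) (P ∪ Q) f := by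
  have hcomp : Integrable (fun p => f (mrg (P ∪ Q) p)) ((pp μ J).prod (pp μ J)) :=
    integrable_comp_mrg hm hf (P ∪ Q)
  filter_upwards [hcomp.prod_right_ae] with x hx
  have hGm : Measurable (fun w => f (mrg (P ∪ Q) (x, w))) :=
    hm.comp ((measurable_mrg (P ∪ Q)).comp measurable_prodMk_left)
  have hGint : Integrable (fun p => f (mrg (P ∪ Q) (x, mrg Q p))) ((pp μ J).prod (pp μ J)) := by
    have h := hx
    rw [show (fun y => f (mrg (P ∪ Q) (x, y))) = fun y => f (mrg (P ∪ Q) (x, y)) from rfl] at h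
    exact integrable_comp_mrg hGm h Q
  calc avg (μ := μ) P (avg (μ := μ) Q f) x
      = ∫ y, ∫ z, f (mrg Q (mrg P (x, y), z)) ∂(pp μ J) ∂(pp μ J) := rfl
    _ = ∫ y, ∫ z, f (mrg (P ∪ Q) (x, mrg Q (y, z))) ∂(pp μ J) ∂(pp μ J) := by
        simp_rw [mrg_mrg]
    _ = ∫ p, f (mrg (P ∪ Q) (x, mrg Q p)) ∂((pp μ J).prod (pp μ J)) :=
        integral_integral hGint
    _ = ∫ w, f (mrg (P ∪ Q) (x, w)) ∂(pp μ J) := integral_comp_mrg hGm Q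
    _ = avg (μ := μ) (P ∪ Q) f x := rfl

/-- avg T f does not depend on coordinates in T (in the mrg sense) -/
lemma avg_dep {f : (Fin J → X) → ℝ} (T P : Finset (Fin J)) (hPT : P ⊆ T)
    (p : (Fin J → X) × (Fin J → X)) :
    avg (μ := μ) T f (mrg P p) = avg (μ := μ) T f p.1 := by
  unfold avg
  congr 1
  funext y
  congr 1
  funext l
  by_cases hT : l ∈ T
  · simp [mrg, hT]
  · have hP : l ∉ P := fun h => hT (hPT h)
    simp [mrg, hT, hP]

/-- (PL): the inner product of two averages -/
lemma avg_mul_avg {f : (Fin J → X) → ℝ} (hm : Measurable f) (hf : MemLp f 2 (pp μ J))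
    (P Q : Finset (Fin J)) :
    ∫ x, avg (μ := μ) P f x * avg (μ := μ) Q f x ∂(pp μ J)
      = ∫ x, f x * avg (μ := μ) (P ∪ Q) f x ∂(pp μ J) := by
  have hPm := measurable_avg (μ := μ) hm P
  have hQm := measurable_avg (μ := μ) hm Q
  have hUm := measurable_avg (μ := μ) hm (P ∪ Q)
  have hPL := memℒp_avg hm hf P
  have hQL := memℒp_avg hm hf Q
  have hUL := memℒp_avg hm hf (P ∪ Q)
  have step1 : ∫ x, avg (μ := μ) P f x * avg (μ := μ) Q f x ∂(pp μ J)
      = ∫ x, avg (μ := μ) P f x * avg (μ := μ) P (avg (μ := μ) Q f) x ∂(pp μ J) :=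
    pull_out P hPm hQm (integrable_mul hPm hQm hPL hQL) (fun p => avg_dep P P (subset_refl P) p)
  have step2 : ∫ x, avg (μ := μ) P f x * avg (μ := μ) P (avg (μ := μ) Q f) x ∂(pp μ J)
      = ∫ x, avg (μ := μ) P f x * avg (μ := μ) (P ∪ Q) f x ∂(pp μ J) := by
    refine integral_congr_ae ?_
    filter_upwards [avg_avg hm (hf.integrable one_le_two) P Q] with x hx
    rw [hx]
  have step3 : ∫ x, avg (μ := μ) (P ∪ Q) f x * f x ∂(pp μ J)
      = ∫ x, avg (μ := μ) (P ∪ Q) f x * avg (μ := μ) P f x ∂(pp μ J) :=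
    pull_out P hUm hm (integrable_mul hUm hm hUL hf)
      (fun p => avg_dep (P ∪ Q) P subset_union_left p)
  rw [step1, step2]
  rw [show (fun x => f x * avg (μ := μ) (P ∪ Q) f x) = fun x => avg (μ := μ) (P ∪ Q) f x * f x
    from funext fun x => mul_comm _ _]
  rw [step3]
  exact integral_congr_ae (ae_of_all _ fun x => mul_comm _ _)



/-! ### update-map lemmas -/

lemma measurable_upd (j : Fin J) :
    Measurable (fun q : (Fin J → X) × X => Function.update q.1 j q.2) := by
  apply measurable_pi_lambda
  intro l
  by_cases hl : l = j
  · subst hl; simpa using measurable_snd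
  · simp only [Function.update_apply, if_neg hl]
    exact (measurable_pi_apply l).comp measurable_fst

lemma integrable_comp_upd {f : (Fin J → X) → ℝ} (hm : Measurable f)
    (hf : Integrable f (pp μ J)) (j : Fin J) :
    Integrable (fun q : (Fin J → X) × X => f (Function.update q.1 j q.2)) ((pp μ J).prod μ) := by
  rw [← map_upd μ j] at hf
  exact (integrable_map_measure (by rw [map_upd μ j]; exact hm.aestronglyMeasurable)
    (measurable_upd j).aemeasurable).mp hf

lemma integral_comp_upd {f : (Fin J → X) → ℝ} (hm : Measurable f) (j : Fin J) :
    ∫ q, f (Function.update q.1 j q.2) ∂((pp μ J).prod μ) = ∫ x, f x ∂(pp μ J) := by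
  conv_rhs => rw [← map_upd μ j]
  exact (integral_map (measurable_upd j).aemeasurable
    (by rw [map_upd μ j]; exact hm.aestronglyMeasurable)).symm

lemma map_fst_pp : Measure.map Prod.fst ((pp μ J).prod μ) = pp μ J := by
  rw [Measure.map_fst_prod]
  simp

lemma integrable_comp_fst {u : (Fin J → X) → ℝ} (hm : Measurable u)
    (hu : Integrable u (pp μ J)) :
    Integrable (fun q : (Fin J → X) × X => u q.1) ((pp μ J).prod μ) := by
  rw [← map_fst_pp (μ := μ) (J := J)] at hu
  exact (integrable_map_measure (by rw [map_fst_pp]; exact hm.aestronglyMeasurable)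
    measurable_fst.aemeasurable).mp hu

lemma integral_comp_fst {u : (Fin J → X) → ℝ} (hm : Measurable u) :
    ∫ q, u q.1 ∂((pp μ J).prod μ) = ∫ x, u x ∂(pp μ J) := by
  conv_rhs => rw [← map_fst_pp (μ := μ) (J := J)]
  exact (integral_map measurable_fst.aemeasurable
    (by rw [map_fst_pp]; exact hm.aestronglyMeasurable)).symm

/-- generic L²·L² integrable -/
lemma integrable_mul' {α : Type*} [MeasurableSpace α] {ν : Measure α} {f h : α → ℝ}
    (hfm : Measurable f) (hhm : Measurable h)
    (hf : MemLp f 2 ν) (hh : MemLp h 2 ν) :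
    Integrable (fun x => f x * h x) ν := by
  refine (hf.integrable_sq.add hh.integrable_sq).mono'
    (hfm.mul hhm).aestronglyMeasurable (ae_of_all _ fun x => ?_)
  rw [Real.norm_eq_abs, abs_mul]
  simp only [Pi.add_apply]
  nlinarith [sq_nonneg (|f x| - |h x|), sq_abs (f x), sq_abs (h x), abs_nonneg (f x),
    abs_nonneg (h x)]

lemma memℒp_comp_fst {u : (Fin J → X) → ℝ} (hm : Measurable u)
    (hu : MemLp u 2 (pp μ J)) :
    MemLp (fun q : (Fin J → X) × X => u q.1) 2 ((pp μ J).prod μ) := by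
  refine (memLp_two_iff_integrable_sq (hm.comp measurable_fst).aestronglyMeasurable).2 ?_
  exact integrable_comp_fst (hm.pow_const 2) hu.integrable_sq

lemma avg_empty {f : (Fin J → X) → ℝ} : avg (μ := μ) (∅ : Finset (Fin J)) f = f := by
  funext x
  have : ∀ y : Fin J → X, mrg (∅ : Finset (Fin J)) (x, y) = x := fun y => by
    funext l; simp [mrg]
  unfold avg
  simp_rw [this]
  simp

lemma avg_univ {f : (Fin J → X) → ℝ} (x : Fin J → X) :
    avg (μ := μ) (univ : Finset (Fin J)) f x = ∫ y, f y ∂(pp μ J) := by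
  have : ∀ y : Fin J → X, mrg (univ : Finset (Fin J)) (x, y) = y := fun y => by
    funext l; simp [mrg]
  unfold avg
  simp_rw [this]

/-- E_j with μ equals avg {j} -/
lemma Ej_eq {g : (Fin J → X) → ℝ} (hgm : Measurable g) (j : Fin J) (x : Fin J → X) :
    ∫ z, g (Function.update x j z) ∂μ = avg (μ := μ) {j} g x := by
  have h1 : ∀ y : Fin J → X, Function.update x j (y j) = mrg {j} (x, y) := by
    intro y; funext l
    rw [Function.update_apply]
    by_cases hl : l = j
    · simp [mrg, hl]
    · simp [mrg, hl]
  conv_lhs => rw [← map_eval μ j]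
  rw [integral_map (measurable_pi_apply j).aemeasurable
    (by rw [map_eval μ j]; exact (hgm.comp (measurable_update x)).aestronglyMeasurable)]
  unfold avg
  congr 1
  funext y
  rw [h1]

/-- the expected conditional variance along coordinate j -/
lemma term_eq {g : (Fin J → X) → ℝ} (hgm : Measurable g) (hgL : MemLp g 2 (pp μ J))
    (j : Fin J) :
    ∫ x, (∫ z, (g (Function.update x j z) - ∫ z', g (Function.update x j z') ∂μ) ^ 2 ∂μ)
        ∂(pp μ J)
      = ∫ x, g x * g x ∂(pp μ J) - ∫ x, g x * avg (μ := μ) {j} g x ∂(pp μ J) := by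
  set E := avg (μ := μ) {j} g with hE
  have hEm : Measurable E := measurable_avg hgm {j}
  have hEL : MemLp E 2 (pp μ J) := memℒp_avg hgm hgL {j}
  have ham : Measurable (fun q : (Fin J → X) × X => g (Function.update q.1 j q.2)) :=
    hgm.comp (measurable_upd j)
  have haL : MemLp (fun q : (Fin J → X) × X => g (Function.update q.1 j q.2)) 2
      ((pp μ J).prod μ) := by
    refine (memLp_two_iff_integrable_sq ham.aestronglyMeasurable).2 ?_
    exact integrable_comp_upd (hgm.pow_const 2) hgL.integrable_sq j
  have hbm : Measurable (fun q : (Fin J → X) × X => E q.1) := hEm.comp measurable_fst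
  have hbL : MemLp (fun q : (Fin J → X) × X => E q.1) 2 ((pp μ J).prod μ) :=
    memℒp_comp_fst hEm hEL
  have haa : Integrable (fun q : (Fin J → X) × X =>
      g (Function.update q.1 j q.2) * g (Function.update q.1 j q.2)) ((pp μ J).prod μ) :=
    integrable_mul' ham ham haL haL
  have hab : Integrable (fun q : (Fin J → X) × X =>
      g (Function.update q.1 j q.2) * E q.1) ((pp μ J).prod μ) :=
    integrable_mul' ham hbm haL hbL
  have hbb : Integrable (fun q : (Fin J → X) × X => E q.1 * E q.1) ((pp μ J).prod μ) :=
    integrable_mul' hbm hbm hbL hbL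
  have hsub : Integrable (fun q : (Fin J → X) × X =>
      (g (Function.update q.1 j q.2) - E q.1) ^ 2) ((pp μ J).prod μ) :=
    (haL.sub hbL).integrable_sq
  have hiter : ∫ x, (∫ z, (g (Function.update x j z)
        - ∫ z', g (Function.update x j z') ∂μ) ^ 2 ∂μ) ∂(pp μ J)
      = ∫ q, (g (Function.update q.1 j q.2) - E q.1) ^ 2 ∂((pp μ J).prod μ) := by
    have h1 : ∀ x, (∫ z, (g (Function.update x j z)
          - ∫ z', g (Function.update x j z') ∂μ) ^ 2 ∂μ)
        = ∫ z, (g (Function.update x j z) - E x) ^ 2 ∂μ := fun x => by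
      rw [Ej_eq hgm j x]
    simp_rw [h1]
    exact integral_integral hsub
  have hexp : ∫ q, (g (Function.update q.1 j q.2) - E q.1) ^ 2 ∂((pp μ J).prod μ)
      = ∫ q, g (Function.update q.1 j q.2) * g (Function.update q.1 j q.2) ∂((pp μ J).prod μ)
        - 2 * ∫ q, g (Function.update q.1 j q.2) * E q.1 ∂((pp μ J).prod μ)
        + ∫ q, E q.1 * E q.1 ∂((pp μ J).prod μ) := by
    have h1 : (fun q : (Fin J → X) × X => (g (Function.update q.1 j q.2) - E q.1) ^ 2)
        = fun q => (g (Function.update q.1 j q.2) * g (Function.update q.1 j q.2)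
            + E q.1 * E q.1) - 2 * (g (Function.update q.1 j q.2) * E q.1) :=
      funext fun q => by ring
    rw [h1]
    have e1 : ∫ q : (Fin J → X) × X, (g (Function.update q.1 j q.2) * g (Function.update q.1 j q.2)
          + E q.1 * E q.1) - 2 * (g (Function.update q.1 j q.2) * E q.1) ∂((pp μ J).prod μ)
        = (∫ q : (Fin J → X) × X, (g (Function.update q.1 j q.2) * g (Function.update q.1 j q.2)
          + E q.1 * E q.1) ∂((pp μ J).prod μ))
          - ∫ q : (Fin J → X) × X, 2 * (g (Function.update q.1 j q.2) * E q.1) ∂((pp μ J).prod μ) :=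
      integral_sub (haa.add hbb) (hab.const_mul 2)
    have e2 : ∫ q : (Fin J → X) × X, (g (Function.update q.1 j q.2) * g (Function.update q.1 j q.2)
          + E q.1 * E q.1) ∂((pp μ J).prod μ)
        = (∫ q : (Fin J → X) × X, g (Function.update q.1 j q.2) * g (Function.update q.1 j q.2)
            ∂((pp μ J).prod μ))
          + ∫ q : (Fin J → X) × X, E q.1 * E q.1 ∂((pp μ J).prod μ) := integral_add haa hbb
    have e3 : ∫ q : (Fin J → X) × X, 2 * (g (Function.update q.1 j q.2) * E q.1) ∂((pp μ J).prod μ)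
        = 2 * ∫ q : (Fin J → X) × X, g (Function.update q.1 j q.2) * E q.1 ∂((pp μ J).prod μ) :=
      integral_const_mul 2 _
    rw [e1, e2, e3]
    ring
  have p1 : ∫ q, g (Function.update q.1 j q.2) * g (Function.update q.1 j q.2)
        ∂((pp μ J).prod μ) = ∫ x, g x * g x ∂(pp μ J) :=
    integral_comp_upd (f := fun x => g x * g x) (hgm.mul hgm) j
  have p3 : ∫ q, E q.1 * E q.1 ∂((pp μ J).prod μ) = ∫ x, E x * E x ∂(pp μ J) :=
    integral_comp_fst (u := fun x => E x * E x) (hEm.mul hEm)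
  have p2 : ∫ q, g (Function.update q.1 j q.2) * E q.1 ∂((pp μ J).prod μ)
      = ∫ x, E x * E x ∂(pp μ J) := by
    rw [integral_prod _ hab]
    refine integral_congr_ae (ae_of_all _ fun x => ?_)
    show ∫ z, g (Function.update x j z) * E x ∂μ = E x * E x
    rw [integral_mul_const, Ej_eq hgm j x]
  have p4 : ∫ x, E x * E x ∂(pp μ J) = ∫ x, g x * avg (μ := μ) {j} g x ∂(pp μ J) := by
    have := avg_mul_avg (μ := μ) hgm hgL {j} {j}
    rw [Finset.union_self] at this
    exact this
  rw [hiter, hexp, p1, p2, p3, p4]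
  ring


/-- positivity of the Efron-Stein component` -/
lemma cv_nonneg {g : (Fin J → X) → ℝ} (hgm : Measurable g) (hgL : MemLp g 2 (pp μ J))
    (U : Finset (Fin J)) :
    0 ≤ ∑ W ∈ U.powerset, (-1 : ℝ) ^ (U.card + W.card)
        * ∫ x, g x * avg (μ := μ) Wᶜ g x ∂(pp μ J) := by
  classical
  set a : Finset (Fin J) → ℝ :=
    fun V => ∫ x, g x * avg (μ := μ) Vᶜ g x ∂(pp μ J) with ha
  have havgm : ∀ T : Finset (Fin J), Measurable (avg (μ := μ) T g) :=
    fun T => measurable_avg hgm T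
  have havgL : ∀ T : Finset (Fin J), MemLp (avg (μ := μ) T g) 2 (pp μ J) :=
    fun T => memℒp_avg hgm hgL T
  have hprodint : ∀ T T' : Finset (Fin J),
      Integrable (fun x => avg (μ := μ) T g x * avg (μ := μ) T' g x) (pp μ J) :=
    fun T T' => integrable_mul' (havgm T) (havgm T') (havgL T) (havgL T')
  set G : (Fin J → X) → ℝ :=
    fun x => ∑ W ∈ U.powerset, (-1 : ℝ) ^ (U.card + W.card) * avg (μ := μ) Wᶜ g x with hG
  have hGnn : 0 ≤ ∫ x, G x * G x ∂(pp μ J) :=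
    integral_nonneg fun x => mul_self_nonneg _
  have hexpand : ∀ x, G x * G x = ∑ W ∈ U.powerset, ∑ W' ∈ U.powerset,
      ((-1 : ℝ) ^ (U.card + W.card) * (-1) ^ (U.card + W'.card))
        * (avg (μ := μ) Wᶜ g x * avg (μ := μ) W'ᶜ g x) := by
    intro x
    rw [hG]
    rw [Finset.sum_mul_sum]
    exact Finset.sum_congr rfl fun W _ => Finset.sum_congr rfl fun W' _ =>
      mul_mul_mul_comm _ _ _ _
  have hint1 : ∀ W ∈ U.powerset, Integrable (fun x => ∑ W' ∈ U.powerset,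
      ((-1 : ℝ) ^ (U.card + W.card) * (-1) ^ (U.card + W'.card))
        * (avg (μ := μ) Wᶜ g x * avg (μ := μ) W'ᶜ g x)) (pp μ J) := by
    intro W _
    exact integrable_finset_sum _ fun W' _ => (hprodint Wᶜ W'ᶜ).const_mul _
  have hGG : ∫ x, G x * G x ∂(pp μ J) = ∑ W ∈ U.powerset, ∑ W' ∈ U.powerset,
      ((-1 : ℝ) ^ (U.card + W.card) * (-1) ^ (U.card + W'.card))
        * ∫ x, avg (μ := μ) Wᶜ g x * avg (μ := μ) W'ᶜ g x ∂(pp μ J) := by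
    rw [show (fun x => G x * G x) = fun x => ∑ W ∈ U.powerset, ∑ W' ∈ U.powerset,
        ((-1 : ℝ) ^ (U.card + W.card) * (-1) ^ (U.card + W'.card))
          * (avg (μ := μ) Wᶜ g x * avg (μ := μ) W'ᶜ g x) from funext hexpand]
    rw [integral_finset_sum _ hint1]
    refine Finset.sum_congr rfl fun W hW => ?_
    rw [integral_finset_sum _ fun W' _ => (hprodint Wᶜ W'ᶜ).const_mul _]
    exact Finset.sum_congr rfl fun W' _ => integral_const_mul _ _
  have hterm : ∀ W ∈ U.powerset, ∀ W' ∈ U.powerset,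
      ∫ x, avg (μ := μ) Wᶜ g x * avg (μ := μ) W'ᶜ g x ∂(pp μ J) = a (W ∩ W') := by
    intro W _ W' _
    rw [ha]
    simp only
    rw [Finset.compl_inter]
    exact avg_mul_avg hgm hgL Wᶜ W'ᶜ
  have hcollapse : ∑ W ∈ U.powerset, ∑ W' ∈ U.powerset,
      ((-1 : ℝ) ^ (U.card + W.card) * (-1) ^ (U.card + W'.card)) * a (W ∩ W')
      = ∑ W ∈ U.powerset, (-1 : ℝ) ^ (U.card + W.card) * a W := by
    have hin : ∀ W ∈ U.powerset,
        ∑ W' ∈ U.powerset,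
          ((-1 : ℝ) ^ (U.card + W.card) * (-1) ^ (U.card + W'.card)) * a (W ∩ W')
        = ((-1 : ℝ) ^ (U.card + W.card) * (-1) ^ U.card)
          * ∑ W' ∈ U.powerset, (-1 : ℝ) ^ W'.card * a (W ∩ W') := by
      intro W _
      rw [Finset.mul_sum]
      refine Finset.sum_congr rfl fun W' _ => ?_
      rw [pow_add (-1 : ℝ) U.card W'.card]
      ring
    rw [Finset.sum_congr rfl hin]
    have hcoll : ∀ W ∈ U.powerset,
        ((-1 : ℝ) ^ (U.card + W.card) * (-1) ^ U.card)
          * ∑ W' ∈ U.powerset, (-1 : ℝ) ^ W'.card * a (W ∩ W')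
        = if W = U then ((-1 : ℝ) ^ (U.card + U.card) * (-1) ^ U.card)
            * ∑ V ∈ U.powerset, (-1 : ℝ) ^ V.card * a V else 0 := by
      intro W hW
      rw [collapse U a W (Finset.mem_powerset.1 hW)]
      by_cases hWU : W = U
      · rw [if_pos hWU, if_pos hWU, hWU]
      · rw [if_neg hWU, if_neg hWU, mul_zero]
    rw [Finset.sum_congr rfl hcoll, Finset.sum_ite_eq' U.powerset U _,
      if_pos (Finset.mem_powerset.2 (Finset.Subset.refl U))]
    have h1 : (-1 : ℝ) ^ (U.card + U.card) = 1 := by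
      rw [pow_add]; exact neg_one_sq_pow U.card
    rw [h1, one_mul, Finset.mul_sum]
    refine Finset.sum_congr rfl fun V _ => ?_
    rw [pow_add]
    ring
  have := hGnn
  rw [hGG, Finset.sum_congr rfl (fun W hW => Finset.sum_congr rfl fun W' hW' => by
    rw [hterm W hW W' hW']), hcollapse] at this
  exact this

/-- junta: averaging over an irrelevant coordinate doesn't change inner products -/
lemma junta_avg {gi g : (Fin J → X) → ℝ} (hgim : Measurable gi) (hgm : Measurable g)
    (hgiL : MemLp gi 2 (pp μ J)) (hgL : MemLp g 2 (pp μ J))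
    {S : Finset (Fin J)} (hdepS : ∀ x y : Fin J → X, (∀ l ∈ S, x l = y l) → gi x = gi y)
    {j : Fin J} (hj : j ∉ S) (P : Finset (Fin J)) :
    ∫ x, gi x * avg (μ := μ) (insert j P) g x ∂(pp μ J)
      = ∫ x, gi x * avg (μ := μ) P g x ∂(pp μ J) := by
  have hins : insert j P = {j} ∪ P := Finset.insert_eq j P
  have havP : Measurable (avg (μ := μ) P g) := measurable_avg hgm P
  have havPL : MemLp (avg (μ := μ) P g) 2 (pp μ J) := memℒp_avg hgm hgL P
  have hdep' : ∀ p : (Fin J → X) × (Fin J → X), gi (mrg {j} p) = gi p.1 := by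
    intro p
    refine hdepS _ _ fun l hl => ?_
    have : l ≠ j := fun e => hj (e ▸ hl)
    simp [mrg, this]
  have step1 : ∫ x, gi x * avg (μ := μ) (insert j P) g x ∂(pp μ J)
      = ∫ x, gi x * avg (μ := μ) {j} (avg (μ := μ) P g) x ∂(pp μ J) := by
    refine integral_congr_ae ?_
    filter_upwards [avg_avg hgm (hgL.integrable one_le_two) {j} P] with x hx
    rw [hins, hx]
  have step2 : ∫ x, gi x * avg (μ := μ) P g x ∂(pp μ J)
      = ∫ x, gi x * avg (μ := μ) {j} (avg (μ := μ) P g) x ∂(pp μ J) :=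
    pull_out {j} hgim havP (integrable_mul' hgim havP hgiL havPL) hdep'
  rw [step1, ← step2]

/-- cancellation: the Efron-Stein component of a junta vanishes above its set -/
lemma junta_cancel {gi g : (Fin J → X) → ℝ} (hgim : Measurable gi) (hgm : Measurable g)
    (hgiL : MemLp gi 2 (pp μ J)) (hgL : MemLp g 2 (pp μ J))
    {S : Finset (Fin J)} (hdepS : ∀ x y : Fin J → X, (∀ l ∈ S, x l = y l) → gi x = gi y)
    {U : Finset (Fin J)} {j : Fin J} (hjU : j ∈ U) (hjS : j ∉ S) :
    ∑ W ∈ U.powerset, (-1 : ℝ) ^ (U.card + W.card)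
        * ∫ x, gi x * avg (μ := μ) Wᶜ g x ∂(pp μ J) = 0 := by
  classical
  have hU : U = insert j (U.erase j) := (Finset.insert_erase hjU).symm
  have hj' : j ∉ U.erase j := Finset.notMem_erase j U
  rw [hU, Finset.sum_powerset_insert hj', ← Finset.sum_add_distrib]
  rw [Finset.sum_eq_zero]
  intro W hW
  have hjW : j ∉ W := fun h => hj' (Finset.mem_powerset.1 hW h)
  have hjWc : j ∈ Wᶜ := Finset.mem_compl.2 hjW
  have hWc : Wᶜ = insert j (Wᶜ.erase j) := (Finset.insert_erase hjWc).symm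
  have hcomplins : (insert j W)ᶜ = Wᶜ.erase j := Finset.compl_insert
  have hval : ∫ x, gi x * avg (μ := μ) Wᶜ g x ∂(pp μ J)
      = ∫ x, gi x * avg (μ := μ) ((insert j W)ᶜ) g x ∂(pp μ J) := by
    rw [hcomplins]
    conv_lhs => rw [hWc]
    exact junta_avg hgim hgm hgiL hgL hdepS hjS (Wᶜ.erase j)
  rw [hval, Finset.card_insert_of_notMem hjW, Finset.card_insert_of_notMem hj']
  rw [show (U.erase j).card + 1 + (W.card + 1) = ((U.erase j).card + 1 + W.card) + 1 by ring,
    pow_succ]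
  ring

end ES15

theorem statement15 {X : Type u} [MeasurableSpace X] (μ : Measure X) [IsProbabilityMeasure μ]
    (J I D : ℕ) (hJ : 0 < J) (hI : 0 < I) (hD : 0 < D)
    (g : (Fin J → X) → ℝ) (gi : Fin I → (Fin J → X) → ℝ)
    (hg : ∀ x, g x = ∑ i, gi i x)
    (hmeas : ∀ i, Measurable (gi i))
    (hL2 : ∀ i, MemLp (gi i) 2 (Measure.pi fun _ : Fin J => μ))
    (hdep : ∀ i, ∃ S : Finset (Fin J), S.card ≤ D ∧
      ∀ x y : Fin J → X, (∀ j ∈ S, x j = y j) → gi i x = gi i y) :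
    ∑ j : Fin J, ∫ x, (∫ z, (g (Function.update x j z) -
          ∫ z', g (Function.update x j z') ∂μ) ^ 2 ∂μ) ∂(Measure.pi fun _ : Fin J => μ)
      ≤ (D : ℝ) * variance g (Measure.pi fun _ : Fin J => μ) := by
  classical
  choose S hScard hSdep using hdep
  have hpp : (Measure.pi fun _ : Fin J => μ) = ES15.pp μ J := rfl
  rw [hpp]
  have hgeq : g = fun x => ∑ i, gi i x := funext hg
  have hgm : Measurable g := by
    rw [hgeq]; exact Finset.measurable_sum _ fun i _ => hmeas i
  have hL2' : ∀ i, MemLp (gi i) 2 (ES15.pp μ J) := hL2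
  have hgL : MemLp g 2 (ES15.pp μ J) := by
    rw [hgeq]; exact memLp_finsetSum _ fun i _ => hL2' i
  set v : Finset (Fin J) → ℝ :=
    fun T => ∫ x, g x * ES15.avg (μ := μ) T g x ∂(ES15.pp μ J) with hv
  set cv : Finset (Fin J) → ℝ :=
    fun U => ∑ W ∈ U.powerset, (-1 : ℝ) ^ (U.card + W.card) * v Wᶜ with hcv
  have F2 : ∀ T : Finset (Fin J), ∑ U ∈ T.powerset, cv U = v Tᶜ :=
    fun T => ES15.mob_inversion T (fun W => v Wᶜ)
  have F3 : ∀ U : Finset (Fin J), 0 ≤ cv U := by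
    intro U
    rw [hcv]
    simp only [hv]
    exact ES15.cv_nonneg hgm hgL U
  have F4 : ∀ U : Finset (Fin J), D < U.card → cv U = 0 := by
    intro U hDU
    have hsplit : cv U = ∑ i, ∑ W ∈ U.powerset, (-1 : ℝ) ^ (U.card + W.card)
        * ∫ x, gi i x * ES15.avg (μ := μ) Wᶜ g x ∂(ES15.pp μ J) := by
      rw [hcv]
      simp only
      have hterm : ∀ W ∈ U.powerset, v Wᶜ
          = ∑ i, ∫ x, gi i x * ES15.avg (μ := μ) Wᶜ g x ∂(ES15.pp μ J) := by
        intro W _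
        rw [hv]
        simp only
        have hfe : (fun x => g x * ES15.avg (μ := μ) Wᶜ g x)
            = fun x => ∑ i, gi i x * ES15.avg (μ := μ) Wᶜ g x :=
          funext fun x => by rw [hg x, Finset.sum_mul]
        rw [hfe, integral_finset_sum _ fun i _ => ES15.integrable_mul' (hmeas i)
          (ES15.measurable_avg hgm Wᶜ) (hL2' i) (ES15.memℒp_avg hgm hgL Wᶜ)]
      rw [Finset.sum_congr rfl (fun W hW => by rw [hterm W hW, Finset.mul_sum])]
      rw [Finset.sum_comm]
    rw [hsplit]
    refine Finset.sum_eq_zero fun i _ => ?_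
    have hnot : ¬ U ⊆ S i := by
      intro hsub
      have := Finset.card_le_card hsub
      have := hScard i
      omega
    obtain ⟨j, hjU, hjS⟩ := Finset.not_subset.1 hnot
    exact ES15.junta_cancel (hmeas i) hgm (hL2' i) hgL (hSdep i) hjU hjS
  have hvempty : v ∅ = ∫ x, g x * g x ∂(ES15.pp μ J) := by
    rw [hv]; simp only; rw [ES15.avg_empty]
  have hterm : ∀ j : Fin J, ∫ x, (∫ z, (g (Function.update x j z) -
        ∫ z', g (Function.update x j z') ∂μ) ^ 2 ∂μ) ∂(ES15.pp μ J) = v ∅ - v {j} := by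
    intro j
    rw [ES15.term_eq hgm hgL j, hvempty]
  have hvar : variance g (ES15.pp μ J) = v ∅ - v univ := by
    rw [ProbabilityTheory.variance_eq_sub hgL, hvempty]
    have h1 : ∫ x, (g ^ 2) x ∂(ES15.pp μ J) = ∫ x, g x * g x ∂(ES15.pp μ J) := by
      refine integral_congr_ae (ae_of_all _ fun x => ?_)
      simp [pow_two]
    have h2 : v univ = (∫ x, g x ∂(ES15.pp μ J)) ^ 2 := by
      rw [hv]
      simp only
      have : ∀ x : Fin J → X, ES15.avg (μ := μ) (univ : Finset (Fin J)) g x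
          = ∫ y, g y ∂(ES15.pp μ J) := ES15.avg_univ
      simp_rw [this]
      rw [integral_mul_const, pow_two]
    rw [h1, h2]
  -- rewrite LHS
  rw [Finset.sum_congr rfl fun j _ => hterm j, hvar]
  -- combinatorial endgame
  have hsingsub : ∀ (j : Fin J) (U : Finset (Fin J)), U ⊆ {j}ᶜ ↔ j ∉ U := by
    intro j U
    constructor
    · intro h hj
      exact absurd (h hj) (by simp)
    · intro hj x hx
      exact Finset.mem_compl.2 fun hx' => hj ((Finset.mem_singleton.1 hx') ▸ hx)
  have hdiff : ∀ j : Fin J, v ∅ - v {j}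
      = ∑ U ∈ (univ : Finset (Fin J)).powerset.filter (fun U => j ∈ U), cv U := by
    intro j
    have h1 : v ∅ = ∑ U ∈ (univ : Finset (Fin J)).powerset, cv U := by
      have := F2 univ; rw [Finset.compl_univ] at this; exact this.symm
    have h2 : v {j} = ∑ U ∈ ({j}ᶜ : Finset (Fin J)).powerset, cv U := by
      have := F2 {j}ᶜ; rw [compl_compl] at this; exact this.symm
    have hsub : ({j}ᶜ : Finset (Fin J)).powerset ⊆ (univ : Finset (Fin J)).powerset :=
      Finset.powerset_mono.2 (Finset.subset_univ _)
    rw [h1, h2, ← Finset.sum_sdiff hsub, add_sub_cancel_right]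
    congr 1
    ext U
    simp only [Finset.mem_sdiff, Finset.mem_powerset, Finset.mem_filter, Finset.subset_univ,
      true_and]
    rw [hsingsub j U]
    tauto
  rw [Finset.sum_congr rfl fun j _ => hdiff j]
  have hswap : ∑ j : Fin J, ∑ U ∈ (univ : Finset (Fin J)).powerset.filter (fun U => j ∈ U), cv U
      = ∑ U ∈ (univ : Finset (Fin J)).powerset, (U.card : ℝ) * cv U := by
    simp_rw [Finset.sum_filter]
    rw [Finset.sum_comm]
    refine Finset.sum_congr rfl fun U _ => ?_
    rw [Finset.sum_ite_mem, Finset.univ_inter, Finset.sum_const, nsmul_eq_mul]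
  rw [hswap]
  have hvuniv : v univ = cv ∅ := by
    have := F2 ∅
    rw [Finset.compl_empty, Finset.powerset_empty, Finset.sum_singleton] at this
    exact this.symm
  have hvemp2 : v ∅ = ∑ U ∈ (univ : Finset (Fin J)).powerset, cv U := by
    have := F2 univ; rw [Finset.compl_univ] at this; exact this.symm
  rw [hvuniv, hvemp2]
  have hmemE : (∅ : Finset (Fin J)) ∈ (univ : Finset (Fin J)).powerset := by
    simp
  rw [← Finset.add_sum_erase _ cv hmemE, add_sub_cancel_left]
  have hL : ∑ U ∈ (univ : Finset (Fin J)).powerset, (U.card : ℝ) * cv U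
      = ∑ U ∈ ((univ : Finset (Fin J)).powerset).erase ∅, (U.card : ℝ) * cv U := by
    rw [Finset.sum_erase]
    simp
  rw [hL, Finset.mul_sum]
  refine Finset.sum_le_sum fun U hU => ?_
  by_cases hUD : U.card ≤ D
  · exact mul_le_mul_of_nonneg_right (by exact_mod_cast hUD) (F3 U)
  · rw [F4 U (not_le.1 hUD)]
    simp
end

section
/- Let n, m, k, D be positive integers, let f : ℝ^N → ℝ^n be a deterministic degree-D polynomial, and let c > 0. For j ∈ [km], let Φ_k(n,m;j) denote the law of the pair (Φ,Φ') where Φ ~ Φ_k(n,m) and Φ' is obtained from Φ by resampling its j-th literal (in lexicographic clause-then-position order) uniformly from the 2n−1 literals different from it, and let λ_j = P_{(Φ,Φ')~Φ_k(n,m;j)}[(Φ,Φ') is c-bad with respect to f]. Then Σ_{j=1}^{km} λ_j ≤ 4D/c. -/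
open MeasureTheory Finset Filter ProbabilityTheory

universe u

set_option linter.unusedSectionVars false
set_option linter.unusedVariables false
set_option maxHeartbeats 1000000

set_option linter.unusedSectionVars false
set_option maxHeartbeats 1000000

section Core
variable {ι S : Type} [Fintype ι] [DecidableEq ι] [Fintype S] [DecidableEq S] [Nonempty S]

noncomputable def Av (B : Finset ι) (g : (ι → S) → ℝ) : (ι → S) → ℝ :=
  fun v => (∑ w : ι → S, g (fun j => if j ∈ B then v j else w j)) / (Fintype.card (ι → S) : ℝ)

lemma card_fun_pos : (0:ℝ) < (Fintype.card (ι → S) : ℝ) := by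
  exact_mod_cast Fintype.card_pos

lemma Av_univ (g : (ι → S) → ℝ) : Av (univ : Finset ι) g = g := by
  funext v
  simp only [Av, mem_univ, if_true]
  rw [Finset.sum_const, Fintype.card, nsmul_eq_mul]
  field_simp

lemma Av_add (B : Finset ι) (g h : (ι → S) → ℝ) : Av B (g + h) = Av B g + Av B h := by
  funext v
  simp [Av, Finset.sum_add_distrib, add_div]

lemma Av_smul (B : Finset ι) (r : ℝ) (g : (ι → S) → ℝ) : Av B (r • g) = r • Av B g := by
  funext v
  simp [Av, ← Finset.mul_sum, mul_div_assoc]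

lemma Av_zero (B : Finset ι) : Av B (0 : (ι → S) → ℝ) = 0 := by
  funext v; simp [Av]

lemma Av_sum {κ : Type*} (B : Finset ι) (s : Finset κ) (F : κ → (ι → S) → ℝ) :
    Av B (∑ x ∈ s, F x) = ∑ x ∈ s, Av B (F x) := by
  funext v
  simp only [Av, Finset.sum_apply]
  rw [Finset.sum_comm, Finset.sum_div]

lemma Av_comp (B B' : Finset ι) (g : (ι → S) → ℝ) :
    Av B (Av B' g) = Av (B ∩ B') g := by
  funext v
  have inv : Function.Involutive (fun p : (ι → S) × (ι → S) =>
      ((fun j => if j ∈ B' then p.1 j else p.2 j),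
       (fun j => if j ∈ B' then p.2 j else p.1 j))) := by
    intro p; ext j <;> by_cases h : j ∈ B' <;> simp [h]
  have hnum : ∑ w : ι → S, ∑ u : ι → S,
        g (fun j => if j ∈ B' then (if j ∈ B then v j else w j) else u j)
      = (Fintype.card (ι → S) : ℝ) * ∑ w : ι → S, g (fun j => if j ∈ B ∩ B' then v j else w j) := by
    calc ∑ w : ι → S, ∑ u : ι → S,
          g (fun j => if j ∈ B' then (if j ∈ B then v j else w j) else u j)
        = ∑ p : (ι → S) × (ι → S),
            g (fun j => if j ∈ B ∩ B' then v j else (if j ∈ B' then p.1 j else p.2 j)) := by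
          rw [Fintype.sum_prod_type]
          apply Finset.sum_congr rfl; intro w _
          apply Finset.sum_congr rfl; intro u _
          congr 1; funext j
          by_cases h1 : j ∈ B <;> by_cases h2 : j ∈ B' <;> simp [h1, h2]
      _ = ∑ p : (ι → S) × (ι → S), g (fun j => if j ∈ B ∩ B' then v j else p.1 j) := by
          rw [← Equiv.sum_comp inv.toPerm
            (fun p : (ι → S) × (ι → S) => g (fun j => if j ∈ B ∩ B' then v j else p.1 j))]
          rfl
      _ = (Fintype.card (ι → S) : ℝ) * ∑ w : ι → S, g (fun j => if j ∈ B ∩ B' then v j else w j) := by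
          rw [Fintype.sum_prod_type]
          simp [Finset.sum_const, Finset.mul_sum]
  have hc := (card_fun_pos (ι := ι) (S := S)).ne'
  simp only [Av]
  rw [← Finset.sum_div, hnum]
  field_simp

lemma Av_adj (B : Finset ι) (g h : (ι → S) → ℝ) :
    ∑ v : ι → S, Av B g v * h v = ∑ v : ι → S, g v * Av B h v := by
  have inv : Function.Involutive (fun p : (ι → S) × (ι → S) =>
      ((fun j => if j ∈ B then p.1 j else p.2 j),
       (fun j => if j ∈ B then p.2 j else p.1 j))) := by
    intro p; ext j <;> by_cases hj : j ∈ B <;> simp [hj]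
  have key : ∑ p : (ι → S) × (ι → S), g (fun j => if j ∈ B then p.1 j else p.2 j) * h p.1
      = ∑ p : (ι → S) × (ι → S), g p.1 * h (fun j => if j ∈ B then p.1 j else p.2 j) := by
    rw [← Equiv.sum_comp inv.toPerm
      (fun p : (ι → S) × (ι → S) => g p.1 * h (fun j => if j ∈ B then p.1 j else p.2 j))]
    apply Fintype.sum_congr
    intro p
    congr 1
    congr 1
    funext j
    by_cases hj : j ∈ B <;> simp [hj, Function.Involutive.toPerm]
  have hc := (card_fun_pos (ι := ι) (S := S)).ne'
  calc ∑ v : ι → S, Av B g v * h v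
      = (∑ p : (ι → S) × (ι → S), g (fun j => if j ∈ B then p.1 j else p.2 j) * h p.1)
          / (Fintype.card (ι → S) : ℝ) := by
        simp only [Av, div_mul_eq_mul_div]
        rw [← Finset.sum_div, Fintype.sum_prod_type]
        congr 1
        exact Finset.sum_congr rfl (fun v _ => by rw [Finset.sum_mul])
    _ = (∑ p : (ι → S) × (ι → S), g p.1 * h (fun j => if j ∈ B then p.1 j else p.2 j))
          / (Fintype.card (ι → S) : ℝ) := by rw [key]
    _ = ∑ v : ι → S, g v * Av B h v := by
        simp only [Av, ← mul_div_assoc]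
        rw [← Finset.sum_div, Fintype.sum_prod_type]
        congr 1
        exact Finset.sum_congr rfl (fun v _ => by rw [Finset.mul_sum])

lemma Av_depOn {g : (ι → S) → ℝ} {C : Finset ι}
    (hg : ∀ v w : ι → S, (∀ i ∈ C, v i = w i) → g v = g w) {j : ι} (hj : j ∉ C)
    (B : Finset ι) : Av (insert j B) g = Av B g := by
  funext v
  simp only [Av]
  congr 1
  apply Finset.sum_congr rfl
  intro w _
  apply hg
  intro i hi
  have hij : i ≠ j := by rintro rfl; exact hj hi
  simp [Finset.mem_insert, hij]

/-- Efron–Stein component. -/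
noncomputable def comp (g : (ι → S) → ℝ) (A : Finset ι) : (ι → S) → ℝ :=
  ∑ B ∈ A.powerset, ((-1:ℝ))^(A.card - B.card) • Av B g

lemma comp_add (g h : (ι → S) → ℝ) (A : Finset ι) :
    comp (g + h) A = comp g A + comp h A := by
  unfold comp
  rw [← Finset.sum_add_distrib]
  exact Finset.sum_congr rfl (fun B _ => by rw [Av_add, smul_add])

lemma comp_smul (r : ℝ) (g : (ι → S) → ℝ) (A : Finset ι) :
    comp (r • g) A = r • comp g A := by
  unfold comp
  rw [Finset.smul_sum]
  exact Finset.sum_congr rfl (fun B _ => by rw [Av_smul, smul_comm])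

lemma comp_zero (A : Finset ι) : comp (0 : (ι → S) → ℝ) A = 0 := by
  unfold comp
  exact Finset.sum_eq_zero (fun B _ => by rw [Av_zero, smul_zero])

lemma signSum (B : Finset ι) :
    ∑ A ∈ (univ : Finset ι).powerset.filter (fun A => B ⊆ A), ((-1:ℝ))^(A.card - B.card)
      = if B = (univ : Finset ι) then 1 else 0 := by
  have := Finset.sum_nbij' (s := (univ : Finset ι).powerset.filter (fun A => B ⊆ A))
      (t := ((univ : Finset ι) \ B).powerset)
      (f := fun A => ((-1:ℝ))^(A.card - B.card)) (g := fun C => ((-1:ℝ))^(C.card))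
      (fun A => A \ B) (fun C => B ∪ C)
      (by intro A hA; simp only [mem_filter, mem_powerset] at hA ⊢
          exact sdiff_subset_sdiff hA.1 (Finset.Subset.refl _))
      (by intro C hC; simp only [mem_powerset] at hC
          simp only [mem_filter, mem_powerset]
          exact ⟨subset_univ _, subset_union_left⟩)
      (by intro A hA; simp only [mem_filter, mem_powerset] at hA
          exact Finset.union_sdiff_of_subset hA.2)
      (by intro C hC; simp only [mem_powerset] at hC
          have hd : Disjoint B C := Finset.disjoint_of_subset_right hC sdiff_disjoint.symm
          rw [Finset.union_sdiff_cancel_left hd])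
      (by intro A hA; simp only [mem_filter, mem_powerset] at hA
          rw [Finset.card_sdiff_of_subset hA.2])
  rw [this]
  have hcast : ∑ C ∈ ((univ : Finset ι) \ B).powerset, ((-1:ℝ)) ^ C.card
      = ((∑ C ∈ ((univ : Finset ι) \ B).powerset, (-1:ℤ) ^ C.card : ℤ) : ℝ) := by
    push_cast
    rfl
  rw [hcast, Finset.sum_powerset_neg_one_pow_card]
  have hiff : (univ : Finset ι) \ B = ∅ ↔ B = univ := by
    rw [Finset.sdiff_eq_empty_iff_subset, Finset.univ_subset_iff]
  split_ifs with h1 h2 h2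
  · norm_num
  · exact absurd (hiff.mp h1) h2
  · exact absurd (hiff.mpr h2) h1
  · norm_num

lemma sumComp (g : (ι → S) → ℝ) :
    ∑ A ∈ (univ : Finset ι).powerset, comp g A = g := by
  have hpw : ∀ A : Finset ι, A.powerset = (univ : Finset ι).powerset.filter (fun B => B ⊆ A) := by
    intro A; ext B; simp [Finset.mem_powerset, Finset.mem_filter, Finset.subset_univ]
  calc ∑ A ∈ (univ : Finset ι).powerset, comp g A
      = ∑ A ∈ (univ : Finset ι).powerset, ∑ B ∈ (univ : Finset ι).powerset,
          if B ⊆ A then ((-1:ℝ))^(A.card - B.card) • Av B g else 0 := by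
        apply Finset.sum_congr rfl; intro A _
        rw [comp, hpw A, Finset.sum_filter]
    _ = ∑ B ∈ (univ : Finset ι).powerset,
          (∑ A ∈ (univ : Finset ι).powerset.filter (fun A => B ⊆ A),
            ((-1:ℝ))^(A.card - B.card)) • Av B g := by
        rw [Finset.sum_comm]
        apply Finset.sum_congr rfl; intro B _
        rw [Finset.sum_filter, Finset.sum_smul]
        apply Finset.sum_congr rfl; intro A _
        split_ifs <;> simp
    _ = ∑ B ∈ (univ : Finset ι).powerset,
          (if B = (univ : Finset ι) then (1:ℝ) else 0) • Av B g := by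
        apply Finset.sum_congr rfl; intro B _
        rw [signSum]
    _ = g := by
        rw [Finset.sum_eq_single (univ : Finset ι)]
        · simp [Av_univ]
        · intro B _ hB; simp [hB]
        · intro h; exact absurd (Finset.mem_powerset.mpr (Finset.Subset.refl _)) h

lemma alt_cancel {A : Finset ι} {j : ι} (hj : j ∈ A) (M : Finset ι → (ι → S) → ℝ)
    (hM : ∀ B ∈ (A.erase j).powerset, M (insert j B) = M B) :
    ∑ B ∈ A.powerset, ((-1:ℝ))^(A.card - B.card) • M B = 0 := by
  have hA : A = insert j (A.erase j) := (Finset.insert_erase hj).symm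
  have hjA : j ∉ A.erase j := Finset.notMem_erase _ _
  rw [hA, Finset.sum_powerset_insert hjA]
  rw [← Finset.sum_add_distrib]
  apply Finset.sum_eq_zero
  intro B hB
  have hjB : j ∉ B := fun h => hjA (Finset.mem_powerset.mp hB h)
  have hcard : B.card ≤ (A.erase j).card := Finset.card_le_card (Finset.mem_powerset.mp hB)
  rw [hM B hB]
  rw [Finset.card_insert_of_notMem hjA, Finset.card_insert_of_notMem hjB]
  have h1 : (A.erase j).card + 1 - B.card = ((A.erase j).card - B.card) + 1 := by omega
  have h2 : (A.erase j).card + 1 - (B.card + 1) = (A.erase j).card - B.card := by omega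
  rw [h1, h2, ← add_smul, pow_succ]
  have hz : ((-1:ℝ))^((A.erase j).card - B.card) * -1 + ((-1:ℝ))^((A.erase j).card - B.card) = 0 := by
    ring
  rw [hz, zero_smul]

lemma comp_eigen_zero {g : (ι → S) → ℝ} {A : Finset ι} {j : ι} (hj : j ∈ A) :
    Av ({j}ᶜ) (comp g A) = 0 := by
  unfold comp
  rw [Av_sum]
  have : ∀ B ∈ A.powerset, Av ({j}ᶜ) (((-1:ℝ))^(A.card - B.card) • Av B g)
      = ((-1:ℝ))^(A.card - B.card) • Av (B.erase j) g := by
    intro B _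
    have hset : ({j}ᶜ : Finset ι) ∩ B = B.erase j := by
      ext i
      simp only [Finset.mem_inter, Finset.mem_compl, Finset.mem_singleton, Finset.mem_erase]
    rw [Av_smul, Av_comp, hset]
  rw [Finset.sum_congr rfl this]
  exact alt_cancel hj (fun B => Av (B.erase j) g)
    (by intro B hB
        have hjB : j ∉ B := fun h => (Finset.notMem_erase j A) (Finset.mem_powerset.mp hB h)
        rw [Finset.erase_insert hjB, Finset.erase_eq_of_notMem hjB])

lemma comp_eigen_one {g : (ι → S) → ℝ} {A : Finset ι} {j : ι} (hj : j ∉ A) :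
    Av ({j}ᶜ) (comp g A) = comp g A := by
  unfold comp
  rw [Av_sum]
  apply Finset.sum_congr rfl
  intro B hB
  have hjB : j ∉ B := fun h => hj (Finset.mem_powerset.mp hB h)
  have hset : ({j}ᶜ : Finset ι) ∩ B = B := by
    ext i
    simp only [Finset.mem_inter, Finset.mem_compl, Finset.mem_singleton]
    exact ⟨fun h => h.2, fun h => ⟨fun he => hjB (he ▸ h), h⟩⟩
  rw [Av_smul, Av_comp, hset]

lemma comp_junta_zero {g : (ι → S) → ℝ} {C : Finset ι}
    (hg : ∀ v w : ι → S, (∀ i ∈ C, v i = w i) → g v = g w)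
    {A : Finset ι} {j : ι} (hjA : j ∈ A) (hjC : j ∉ C) :
    comp g A = 0 := by
  unfold comp
  exact alt_cancel hjA (fun B => Av B g) (fun B _ => Av_depOn hg hjC B)

lemma ortho_aux {g : (ι → S) → ℝ} {A B : Finset ι} {j : ι} (hjA : j ∈ A) (hjB : j ∉ B) :
    ∑ v : ι → S, comp g A v * comp g B v = 0 := by
  have h1 : comp g B = Av ({j}ᶜ) (comp g B) := (comp_eigen_one hjB).symm
  rw [h1, ← Av_adj, comp_eigen_zero hjA]
  simp

lemma comp_ortho {g : (ι → S) → ℝ} {A B : Finset ι} (hAB : A ≠ B) :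
    ∑ v : ι → S, comp g A v * comp g B v = 0 := by
  by_cases h : A ⊆ B
  · have hBA : ¬ B ⊆ A := fun h' => hAB (Finset.Subset.antisymm h h')
    obtain ⟨j, hjB, hjA⟩ := Finset.not_subset.mp hBA
    calc ∑ v : ι → S, comp g A v * comp g B v
        = ∑ v : ι → S, comp g B v * comp g A v :=
          Finset.sum_congr rfl (fun v _ => mul_comm _ _)
      _ = 0 := ortho_aux hjB hjA
  · obtain ⟨j, hjA, hjB⟩ := Finset.not_subset.mp h
    exact ortho_aux hjA hjB

lemma comp_sq_nonneg (g : (ι → S) → ℝ) (A : Finset ι) :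
    0 ≤ ∑ v : ι → S, comp g A v * comp g A v :=
  Finset.sum_nonneg (fun v _ => mul_self_nonneg _)

theorem spectral (D : ℕ) (g : (ι → S) → ℝ)
    (hg : g ∈ Submodule.span ℝ {h : (ι → S) → ℝ |
      ∃ C : Finset ι, C.card ≤ D ∧ ∀ v w, (∀ i ∈ C, v i = w i) → h v = h w}) :
    ∑ j : ι, (∑ v : ι → S, g v * g v - ∑ v : ι → S, g v * Av ({j}ᶜ) g v)
      ≤ (D : ℝ) * ∑ v : ι → S, g v * g v := by
  classical
  have hvan : ∀ A : Finset ι, D < A.card → comp g A = 0 := by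
    intro A hA
    induction hg using Submodule.span_induction with
    | mem x hx =>
        obtain ⟨C, hC, hdep⟩ := hx
        have hns : ¬ A ⊆ C := fun hsub => by
          have := Finset.card_le_card hsub; omega
        obtain ⟨j, hjA, hjC⟩ := Finset.not_subset.mp hns
        exact comp_junta_zero hdep hjA hjC
    | zero => exact comp_zero A
    | add x y hx hy ihx ihy => rw [comp_add, ihx, ihy, add_zero]
    | smul a x hx ihx => rw [comp_smul, ihx, smul_zero]
  have hgv : ∀ v, g v = ∑ A ∈ (univ : Finset ι).powerset, comp g A v := by
    intro v
    conv_lhs => rw [← sumComp g]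
    rw [Finset.sum_apply]
  have ipc : ∀ A : Finset ι, ∑ v : ι → S, g v * comp g A v
      = ∑ v : ι → S, comp g A v * comp g A v := by
    intro A
    calc ∑ v : ι → S, g v * comp g A v
        = ∑ v : ι → S, ∑ A' ∈ (univ : Finset ι).powerset, comp g A' v * comp g A v := by
          apply Finset.sum_congr rfl; intro v _
          rw [hgv v, Finset.sum_mul]
      _ = ∑ A' ∈ (univ : Finset ι).powerset, ∑ v : ι → S, comp g A' v * comp g A v :=
          Finset.sum_comm
      _ = ∑ v : ι → S, comp g A v * comp g A v := by
          rw [Finset.sum_eq_single A]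
          · intro A' _ hne; exact comp_ortho hne
          · intro h; exact absurd (Finset.mem_powerset.mpr (Finset.subset_univ A)) h
  have ipgg : ∑ v : ι → S, g v * g v
      = ∑ A ∈ (univ : Finset ι).powerset, ∑ v : ι → S, comp g A v * comp g A v := by
    calc ∑ v : ι → S, g v * g v
        = ∑ v : ι → S, ∑ A ∈ (univ : Finset ι).powerset, g v * comp g A v := by
          apply Finset.sum_congr rfl; intro v _
          nth_rewrite 2 [hgv v]
          rw [Finset.mul_sum]
      _ = ∑ A ∈ (univ : Finset ι).powerset, ∑ v : ι → S, g v * comp g A v :=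
          Finset.sum_comm
      _ = _ := Finset.sum_congr rfl (fun A _ => ipc A)
  have ipEj : ∀ j : ι, ∑ v : ι → S, g v * Av ({j}ᶜ) g v
      = ∑ A ∈ (univ : Finset ι).powerset.filter (fun A => ¬ j ∈ A),
          ∑ v : ι → S, comp g A v * comp g A v := by
    intro j
    have hEg : Av ({j}ᶜ) g
        = ∑ A ∈ (univ : Finset ι).powerset.filter (fun A => ¬ j ∈ A), comp g A := by
      conv_lhs => rw [← sumComp g]
      rw [Av_sum]
      rw [Finset.sum_filter]
      apply Finset.sum_congr rfl
      intro A _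
      by_cases hj : j ∈ A
      · rw [comp_eigen_zero hj]; simp [hj]
      · rw [comp_eigen_one hj]; simp [hj]
    rw [hEg]
    calc ∑ v : ι → S, g v * (∑ A ∈ (univ : Finset ι).powerset.filter (fun A => ¬ j ∈ A), comp g A) v
        = ∑ v : ι → S, ∑ A ∈ (univ : Finset ι).powerset.filter (fun A => ¬ j ∈ A),
            g v * comp g A v := by
          apply Finset.sum_congr rfl; intro v _
          rw [Finset.sum_apply, Finset.mul_sum]
      _ = ∑ A ∈ (univ : Finset ι).powerset.filter (fun A => ¬ j ∈ A),
            ∑ v : ι → S, g v * comp g A v := Finset.sum_comm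
      _ = _ := Finset.sum_congr rfl (fun A _ => ipc A)
  have hdiff : ∀ j : ι, ∑ v : ι → S, g v * g v - ∑ v : ι → S, g v * Av ({j}ᶜ) g v
      = ∑ A ∈ (univ : Finset ι).powerset.filter (fun A => j ∈ A),
          ∑ v : ι → S, comp g A v * comp g A v := by
    intro j
    rw [ipgg, ipEj j]
    have := Finset.sum_filter_add_sum_filter_not (univ : Finset ι).powerset
      (fun A => j ∈ A) (fun A => ∑ v : ι → S, comp g A v * comp g A v)
    linarith
  calc ∑ j : ι, (∑ v : ι → S, g v * g v - ∑ v : ι → S, g v * Av ({j}ᶜ) g v)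
      = ∑ j : ι, ∑ A ∈ (univ : Finset ι).powerset.filter (fun A => j ∈ A),
          ∑ v : ι → S, comp g A v * comp g A v :=
        Finset.sum_congr rfl (fun j _ => hdiff j)
    _ = ∑ j : ι, ∑ A ∈ (univ : Finset ι).powerset,
          (if j ∈ A then ∑ v : ι → S, comp g A v * comp g A v else 0) :=
        Finset.sum_congr rfl (fun j _ => Finset.sum_filter _ _)
    _ = ∑ A ∈ (univ : Finset ι).powerset, ∑ j : ι,
          (if j ∈ A then ∑ v : ι → S, comp g A v * comp g A v else 0) := Finset.sum_comm
    _ = ∑ A ∈ (univ : Finset ι).powerset,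
          (A.card : ℝ) * ∑ v : ι → S, comp g A v * comp g A v := by
        apply Finset.sum_congr rfl; intro A _
        rw [Finset.sum_ite_mem, Finset.univ_inter, Finset.sum_const, nsmul_eq_mul]
    _ ≤ ∑ A ∈ (univ : Finset ι).powerset,
          (D : ℝ) * ∑ v : ι → S, comp g A v * comp g A v := by
        apply Finset.sum_le_sum
        intro A _
        by_cases hA : A.card ≤ D
        · exact mul_le_mul_of_nonneg_right (by exact_mod_cast hA) (comp_sq_nonneg g A)
        · have := hvan A (by omega)
          rw [this]
          simp
    _ = (D : ℝ) * ∑ v : ι → S, g v * g v := by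
        rw [← Finset.mul_sum, ipgg]

lemma card_restS_pos (j : ι) : (0:ℝ) < (Fintype.card ({j' : ι // j' ≠ j} → S) : ℝ) := by
  exact_mod_cast Fintype.card_pos

lemma Av_compl_single (g : (ι → S) → ℝ) (j : ι) (v : ι → S) :
    Av ({j}ᶜ) g v = (∑ s : S, g (Function.update v j s)) / (Fintype.card S : ℝ) := by
  have hfun : ∀ w : ι → S,
      (fun j' => if j' ∈ ({j}ᶜ : Finset ι) then v j' else w j') = Function.update v j (w j) := by
    intro w; funext j'
    by_cases h : j' = j
    · subst h; simp
    · simp [Function.update_apply, h]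
  have e := Equiv.piSplitAt j (fun _ : ι => S)
  have hsum : ∑ w : ι → S, g (Function.update v j (w j))
      = (Fintype.card ({j' : ι // j' ≠ j} → S) : ℝ) * ∑ s : S, g (Function.update v j s) := by
    calc ∑ w : ι → S, g (Function.update v j (w j))
        = ∑ p : S × ({j' : ι // j' ≠ j} → S), g (Function.update v j p.1) := by
          rw [← Equiv.sum_comp (Equiv.piSplitAt j (fun _ : ι => S))
            (fun p : S × ({j' : ι // j' ≠ j} → S) => g (Function.update v j p.1))]
          rfl
      _ = ∑ s : S, ∑ _r : {j' : ι // j' ≠ j} → S, g (Function.update v j s) := by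
          rw [Fintype.sum_prod_type]
      _ = _ := by
          rw [Finset.sum_comm]
          simp [Finset.sum_const, Finset.mul_sum]
  have hcard : (Fintype.card (ι → S) : ℝ)
      = (Fintype.card S : ℝ) * (Fintype.card ({j' : ι // j' ≠ j} → S) : ℝ) := by
    rw [← Nat.cast_mul]
    congr 1
    rw [Fintype.card_congr (Equiv.piSplitAt j (fun _ : ι => S)), Fintype.card_prod]
  have hS : (0:ℝ) < (Fintype.card S : ℝ) := by exact_mod_cast Fintype.card_pos
  have hR := card_restS_pos (ι := ι) (S := S) j
  simp only [Av]
  rw [Finset.sum_congr rfl (fun w _ => by rw [hfun w]), hsum, hcard]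
  field_simp

lemma update_bridge (g : (ι → S) → ℝ) (j : ι) :
    ∑ v : ι → S, ∑ s : S, (g v - g (Function.update v j s))^2
      = 2 * (Fintype.card S : ℝ) *
          (∑ v : ι → S, g v * g v - ∑ v : ι → S, g v * Av ({j}ᶜ) g v) := by
  have hS : (0:ℝ) < (Fintype.card S : ℝ) := by exact_mod_cast Fintype.card_pos
  have hA : ∑ v : ι → S, ∑ _s : S, g v * g v
      = (Fintype.card S : ℝ) * ∑ v : ι → S, g v * g v := by
    rw [Finset.sum_comm]
    simp [Finset.sum_const, Finset.mul_sum]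
  have inv : Function.Involutive
      (fun p : (ι → S) × S => (Function.update p.1 j p.2, p.1 j)) := by
    intro p
    simp [Function.update_idem, Function.update_eq_self, Function.update_self]
  have hB : ∑ v : ι → S, ∑ s : S, g (Function.update v j s) * g (Function.update v j s)
      = (Fintype.card S : ℝ) * ∑ v : ι → S, g v * g v := by
    calc ∑ v : ι → S, ∑ s : S, g (Function.update v j s) * g (Function.update v j s)
        = ∑ p : (ι → S) × S, g (Function.update p.1 j p.2) * g (Function.update p.1 j p.2) := by
          rw [Fintype.sum_prod_type]
      _ = ∑ p : (ι → S) × S, g p.1 * g p.1 := by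
          rw [← Equiv.sum_comp inv.toPerm (fun p : (ι → S) × S => g p.1 * g p.1)]
          rfl
      _ = (Fintype.card S : ℝ) * ∑ v : ι → S, g v * g v := by
          rw [Fintype.sum_prod_type]
          rw [Finset.sum_comm]
          simp [Finset.sum_const, Finset.mul_sum]
  have hC : ∑ v : ι → S, ∑ s : S, g v * g (Function.update v j s)
      = (Fintype.card S : ℝ) * ∑ v : ι → S, g v * Av ({j}ᶜ) g v := by
    rw [Finset.mul_sum]
    apply Finset.sum_congr rfl
    intro v _
    rw [← Finset.mul_sum, Av_compl_single]
    field_simp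
  calc ∑ v : ι → S, ∑ s : S, (g v - g (Function.update v j s))^2
      = ∑ v : ι → S, ∑ s : S,
          (g v * g v + g (Function.update v j s) * g (Function.update v j s)
            - 2 * (g v * g (Function.update v j s))) := by
        apply Finset.sum_congr rfl; intro v _
        apply Finset.sum_congr rfl; intro s _
        ring
    _ = (∑ v : ι → S, ∑ _s : S, g v * g v)
        + (∑ v : ι → S, ∑ s : S, g (Function.update v j s) * g (Function.update v j s))
        - 2 * ∑ v : ι → S, ∑ s : S, g v * g (Function.update v j s) := by
        simp only [Finset.sum_sub_distrib, Finset.sum_add_distrib, ← Finset.mul_sum]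
    _ = _ := by
        rw [hA, hB, hC]
        ring

theorem core_bound (D : ℕ) (g : (ι → S) → ℝ)
    (hg : g ∈ Submodule.span ℝ {h : (ι → S) → ℝ |
      ∃ C : Finset ι, C.card ≤ D ∧ ∀ v w, (∀ i ∈ C, v i = w i) → h v = h w}) :
    ∑ j : ι, ∑ v : ι → S, ∑ s : S, (g v - g (Function.update v j s))^2
      ≤ 2 * (D : ℝ) * (Fintype.card S : ℝ) * ∑ v : ι → S, g v * g v := by
  have hS : (0:ℝ) ≤ (Fintype.card S : ℝ) := by positivity
  calc ∑ j : ι, ∑ v : ι → S, ∑ s : S, (g v - g (Function.update v j s))^2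
      = ∑ j : ι, 2 * (Fintype.card S : ℝ) *
          (∑ v : ι → S, g v * g v - ∑ v : ι → S, g v * Av ({j}ᶜ) g v) :=
        Finset.sum_congr rfl (fun j _ => update_bridge g j)
    _ = 2 * (Fintype.card S : ℝ) *
          ∑ j : ι, (∑ v : ι → S, g v * g v - ∑ v : ι → S, g v * Av ({j}ᶜ) g v) := by
        rw [Finset.mul_sum]
    _ ≤ 2 * (Fintype.card S : ℝ) * ((D : ℝ) * ∑ v : ι → S, g v * g v) := by
        apply mul_le_mul_of_nonneg_left (spectral D g hg) (by positivity)
    _ = 2 * (D : ℝ) * (Fintype.card S : ℝ) * ∑ v : ι → S, g v * g v := by ring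

end Core

-- transfer lemmas
lemma sum_form_eq {n m k : ℕ} (h : Formula n m k → ℝ) :
    ∑ Φ : Formula n m k, h Φ = ∑ v : Fin m × Fin k → Fin n × Bool, h (fun a b => v (a, b)) :=
  (Fintype.sum_equiv (Equiv.curry (Fin m) (Fin k) (Fin n × Bool))
    (fun v => h (fun a b => v (a, b))) h (fun _ => rfl)).symm

lemma updLit_curry {n m k : ℕ} (v : Fin m × Fin k → Fin n × Bool) (a : Fin m) (b : Fin k)
    (L : Fin n × Bool) :
    updLit (fun a' b' => v (a', b')) a b L
      = fun a' b' => Function.update v (a, b) L (a', b') := by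
  funext a' b'
  rw [Function.update_apply]
  simp only [updLit, Prod.mk.injEq]

-- span membership
lemma span_mem {n m k D : ℕ} (f : (Coords n m k → ℝ) → Fin n → ℝ)
    (hf : IsDegPoly n m k D f) (i : Fin n) :
    (fun v : Fin m × Fin k → Fin n × Bool => f (encode (fun a b => v (a, b))) i)
      ∈ Submodule.span ℝ {h : (Fin m × Fin k → Fin n × Bool) → ℝ |
        ∃ C : Finset (Fin m × Fin k), C.card ≤ D ∧
          ∀ v w, (∀ x ∈ C, v x = w x) → h v = h w} := by
  classical
  obtain ⟨p, hdeg, hev⟩ := hf i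
  have hev' : ∀ x, f x i = MvPolynomial.eval x p := hev
  have hrepr : (fun v : Fin m × Fin k → Fin n × Bool => f (encode (fun a b => v (a, b))) i)
      = ∑ d ∈ p.support, (MvPolynomial.coeff d p) •
          (fun v : Fin m × Fin k → Fin n × Bool =>
            ∏ x ∈ d.support, (encode (fun a b => v (a, b)) x) ^ (d x)) := by
    funext v
    rw [hev', MvPolynomial.eval_eq, Finset.sum_apply]
    apply Finset.sum_congr rfl
    intro d _
    simp [smul_eq_mul]
  rw [hrepr]
  apply Submodule.sum_mem
  intro d hd
  apply Submodule.smul_mem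
  apply Submodule.subset_span
  refine ⟨d.support.image (fun x => (x.1, x.2.1)), ?_, ?_⟩
  · calc (d.support.image (fun x : Coords n m k => (x.1, x.2.1))).card
        ≤ d.support.card := Finset.card_image_le
      _ ≤ d.sum (fun _ e => e) := by
          rw [Finset.card_eq_sum_ones, Finsupp.sum]
          apply Finset.sum_le_sum
          intro x hx
          exact Nat.one_le_iff_ne_zero.mpr (Finsupp.mem_support_iff.mp hx)
      _ ≤ p.totalDegree := MvPolynomial.le_totalDegree hd
      _ ≤ D := hdeg
  · intro v w hvw
    apply Finset.prod_congr rfl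
    intro x hx
    have hx' : v (x.1, x.2.1) = w (x.1, x.2.1) :=
      hvw (x.1, x.2.1) (Finset.mem_image_of_mem _ hx)
    simp only [encode]
    rcases eq_or_ne (w (x.1, x.2.1)) x.2.2 with h | h
    · rw [if_pos (hx'.trans h), if_pos h]
    · rw [if_neg (fun hh => h (hx'.symm.trans hh)), if_neg h]


noncomputable def gcomp {n m k : ℕ} (f : (Coords n m k → ℝ) → Fin n → ℝ) (i : Fin n) :
    (Fin m × Fin k → Fin n × Bool) → ℝ :=
  fun v => f (encode (fun a b => v (a, b))) i

theorem statement16 (n m k D : ℕ) (hn : 0 < n) (hm : 0 < m) (hk : 0 < k) (hD : 0 < D)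
    (f : (Coords n m k → ℝ) → Fin n → ℝ) (hf : IsDegPoly n m k D f)
    (c : ℝ) (hc : 0 < c) :
    ∑ a : Fin m, ∑ b : Fin k, lambdaPos f c a b ≤ 4 * (D : ℝ) / c := by
  classical
  haveI hNE : Nonempty (Fin n × Bool) := ⟨(⟨0, hn⟩, true)⟩
  have hCf : (0:ℝ) < (Fintype.card (Formula n m k) : ℝ) := by exact_mod_cast Fintype.card_pos
  have hSQ0 : (0:ℝ) ≤ ∑ Φ : Formula n m k, ∑ i, f (encode Φ) i ^ 2 :=
    Finset.sum_nonneg fun Φ _ => Finset.sum_nonneg fun i _ => sq_nonneg _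
  have hEform : Eform n m k (fun Ψ => ∑ i, (f (encode Ψ) i) ^ 2)
      = (∑ Φ : Formula n m k, ∑ i, f (encode Φ) i ^ 2)
          / (Fintype.card (Formula n m k) : ℝ) := rfl
  have hRHS0 : (0:ℝ) ≤ 4 * (D:ℝ) / c := by positivity
  rcases eq_or_lt_of_le hSQ0 with hSQz | hSQpos
  · -- degenerate case: f vanishes identically on encodings
    have hzero : ∀ (Ψ : Formula n m k) (i : Fin n), f (encode Ψ) i = 0 := by
      intro Ψ i
      have h1 : ∑ i, f (encode Ψ) i ^ 2 = 0 :=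
        (Finset.sum_eq_zero_iff_of_nonneg
          (fun Φ _ => Finset.sum_nonneg fun i _ => sq_nonneg (f (encode Φ) i))).mp
            hSQz.symm Ψ (Finset.mem_univ _)
      have h2 := (Finset.sum_eq_zero_iff_of_nonneg
          (fun i _ => sq_nonneg (f (encode Ψ) i))).mp h1 i (Finset.mem_univ _)
      exact pow_eq_zero_iff two_ne_zero |>.mp h2
    have hnb : ∀ (a : Fin m) (b : Fin k), lambdaPos f c a b = 0 := by
      intro a b
      unfold lambdaPos
      rw [Finset.sum_eq_zero, zero_div]
      intro Φ _
      apply Finset.sum_eq_zero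
      intro L _
      rw [if_neg]
      rintro ⟨-, hbad⟩
      have hbad' : c * ((∑ Φ : Formula n m k, ∑ i, f (encode Φ) i ^ 2)
          / (Fintype.card (Formula n m k) : ℝ))
          < ∑ i, (f (encode Φ) i - f (encode (updLit Φ a b L)) i) ^ 2 := hbad
      rw [← hSQz] at hbad'
      simp [hzero] at hbad'
    calc ∑ a : Fin m, ∑ b : Fin k, lambdaPos f c a b
        = 0 := Finset.sum_eq_zero fun a _ => Finset.sum_eq_zero fun b _ => hnb a b
      _ ≤ 4 * (D:ℝ) / c := hRHS0
  · -- main case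
    have hcore : ∀ i : Fin n,
        ∑ j : Fin m × Fin k, ∑ v : Fin m × Fin k → Fin n × Bool, ∑ s : Fin n × Bool,
          (gcomp f i v - gcomp f i (Function.update v j s))^2
        ≤ 2 * (D:ℝ) * (Fintype.card (Fin n × Bool) : ℝ) *
            ∑ v : Fin m × Fin k → Fin n × Bool, gcomp f i v * gcomp f i v :=
      fun i => core_bound D (gcomp f i) (span_mem f hf i)
    have hSQ_eq : ∑ Φ : Formula n m k, ∑ i, f (encode Φ) i ^ 2
        = ∑ i : Fin n, ∑ v : Fin m × Fin k → Fin n × Bool, gcomp f i v * gcomp f i v := by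
      rw [sum_form_eq (fun Φ => ∑ i, f (encode Φ) i ^ 2), Finset.sum_comm]
      apply Finset.sum_congr rfl; intro i _
      apply Finset.sum_congr rfl; intro v _
      rw [sq]
      rfl
    have hTotal : ∑ a : Fin m, ∑ b : Fin k, ∑ Φ : Formula n m k, ∑ L : Fin n × Bool,
          ∑ i : Fin n, (f (encode Φ) i - f (encode (updLit Φ a b L)) i)^2
        ≤ 2 * (D:ℝ) * (Fintype.card (Fin n × Bool) : ℝ) *
            (∑ Φ : Formula n m k, ∑ i, f (encode Φ) i ^ 2) := by
      have step1 : ∀ (a : Fin m) (b : Fin k),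
          ∑ Φ : Formula n m k, ∑ L : Fin n × Bool,
            ∑ i : Fin n, (f (encode Φ) i - f (encode (updLit Φ a b L)) i)^2
          = ∑ v : Fin m × Fin k → Fin n × Bool, ∑ s : Fin n × Bool, ∑ i : Fin n,
              (gcomp f i v - gcomp f i (Function.update v (a, b) s))^2 := by
        intro a b
        rw [sum_form_eq (fun Φ => ∑ L : Fin n × Bool,
          ∑ i : Fin n, (f (encode Φ) i - f (encode (updLit Φ a b L)) i)^2)]
        apply Finset.sum_congr rfl; intro v _
        apply Finset.sum_congr rfl; intro s _
        apply Finset.sum_congr rfl; intro i _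
        have harg : f (encode (updLit (fun a' b' => v (a', b')) a b s)) i
            = gcomp f i (Function.update v (a, b) s) := by
          rw [updLit_curry]
          rfl
        rw [harg]
        rfl
      calc ∑ a : Fin m, ∑ b : Fin k, ∑ Φ : Formula n m k, ∑ L : Fin n × Bool,
            ∑ i : Fin n, (f (encode Φ) i - f (encode (updLit Φ a b L)) i)^2
          = ∑ a : Fin m, ∑ b : Fin k, ∑ v : Fin m × Fin k → Fin n × Bool, ∑ s : Fin n × Bool,
              ∑ i : Fin n, (gcomp f i v - gcomp f i (Function.update v (a, b) s))^2 :=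
            Finset.sum_congr rfl fun a _ => Finset.sum_congr rfl fun b _ => step1 a b
        _ = ∑ j : Fin m × Fin k, ∑ v : Fin m × Fin k → Fin n × Bool, ∑ s : Fin n × Bool,
              ∑ i : Fin n, (gcomp f i v - gcomp f i (Function.update v j s))^2 :=
            (Fintype.sum_prod_type (fun j : Fin m × Fin k =>
              ∑ v : Fin m × Fin k → Fin n × Bool, ∑ s : Fin n × Bool,
                ∑ i : Fin n, (gcomp f i v - gcomp f i (Function.update v j s))^2)).symm
        _ = ∑ j : Fin m × Fin k, ∑ v : Fin m × Fin k → Fin n × Bool, ∑ i : Fin n,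
              ∑ s : Fin n × Bool, (gcomp f i v - gcomp f i (Function.update v j s))^2 :=
            Finset.sum_congr rfl fun j _ => Finset.sum_congr rfl fun v _ => Finset.sum_comm
        _ = ∑ j : Fin m × Fin k, ∑ i : Fin n, ∑ v : Fin m × Fin k → Fin n × Bool,
              ∑ s : Fin n × Bool, (gcomp f i v - gcomp f i (Function.update v j s))^2 :=
            Finset.sum_congr rfl fun j _ => Finset.sum_comm
        _ = ∑ i : Fin n, ∑ j : Fin m × Fin k, ∑ v : Fin m × Fin k → Fin n × Bool,
              ∑ s : Fin n × Bool, (gcomp f i v - gcomp f i (Function.update v j s))^2 :=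
            Finset.sum_comm
        _ ≤ ∑ i : Fin n, 2 * (D:ℝ) * (Fintype.card (Fin n × Bool) : ℝ) *
              ∑ v : Fin m × Fin k → Fin n × Bool, gcomp f i v * gcomp f i v :=
            Finset.sum_le_sum fun i _ => hcore i
        _ = 2 * (D:ℝ) * (Fintype.card (Fin n × Bool) : ℝ) *
              (∑ Φ : Formula n m k, ∑ i, f (encode Φ) i ^ 2) := by
            rw [← Finset.mul_sum, hSQ_eq]
    have hMark : ∀ (a : Fin m) (b : Fin k),
        (∑ Φ : Formula n m k, ∑ L : Fin n × Bool,
          if L ≠ Φ a b ∧ cBad f c Φ (updLit Φ a b L) then (1:ℝ) else 0)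
            * (c * ∑ Φ : Formula n m k, ∑ i, f (encode Φ) i ^ 2)
        ≤ (Fintype.card (Formula n m k) : ℝ) *
            ∑ Φ : Formula n m k, ∑ L : Fin n × Bool,
              ∑ i : Fin n, (f (encode Φ) i - f (encode (updLit Φ a b L)) i)^2 := by
      intro a b
      rw [Finset.sum_mul]
      conv_rhs => rw [Finset.mul_sum]
      apply Finset.sum_le_sum
      intro Φ _
      rw [Finset.sum_mul]
      conv_rhs => rw [Finset.mul_sum]
      apply Finset.sum_le_sum
      intro L _
      split_ifs with hcond
      · rw [one_mul]
        have hbad : c * ((∑ Φ : Formula n m k, ∑ i, f (encode Φ) i ^ 2)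
            / (Fintype.card (Formula n m k) : ℝ))
            < ∑ i, (f (encode Φ) i - f (encode (updLit Φ a b L)) i) ^ 2 := hcond.2
        rw [mul_div_assoc'] at hbad
        have h2 := (div_lt_iff₀ hCf).mp hbad
        linarith
      · rw [zero_mul]
        positivity
    -- assemble
    have hn1 : (1:ℝ) ≤ (n:ℝ) := by exact_mod_cast hn
    have hden : (0:ℝ) < (Fintype.card (Formula n m k) : ℝ) * (2 * (n:ℝ) - 1) :=
      mul_pos hCf (by linarith)
    have hsum_div : ∑ a : Fin m, ∑ b : Fin k, lambdaPos f c a b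
        = (∑ a : Fin m, ∑ b : Fin k, ∑ Φ : Formula n m k, ∑ L : Fin n × Bool,
            if L ≠ Φ a b ∧ cBad f c Φ (updLit Φ a b L) then (1:ℝ) else 0)
          / ((Fintype.card (Formula n m k) : ℝ) * (2 * (n:ℝ) - 1)) := by
      unfold lambdaPos
      simp only [← Finset.sum_div]
    have hPm : (∑ a : Fin m, ∑ b : Fin k, ∑ Φ : Formula n m k, ∑ L : Fin n × Bool,
          if L ≠ Φ a b ∧ cBad f c Φ (updLit Φ a b L) then (1:ℝ) else 0)
            * (c * ∑ Φ : Formula n m k, ∑ i, f (encode Φ) i ^ 2)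
        ≤ (Fintype.card (Formula n m k) : ℝ) *
            (2 * (D:ℝ) * (Fintype.card (Fin n × Bool) : ℝ) *
              (∑ Φ : Formula n m k, ∑ i, f (encode Φ) i ^ 2)) := by
      calc (∑ a : Fin m, ∑ b : Fin k, ∑ Φ : Formula n m k, ∑ L : Fin n × Bool,
            if L ≠ Φ a b ∧ cBad f c Φ (updLit Φ a b L) then (1:ℝ) else 0)
              * (c * ∑ Φ : Formula n m k, ∑ i, f (encode Φ) i ^ 2)
          = ∑ a : Fin m, ∑ b : Fin k, ((∑ Φ : Formula n m k, ∑ L : Fin n × Bool,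
              if L ≠ Φ a b ∧ cBad f c Φ (updLit Φ a b L) then (1:ℝ) else 0)
                * (c * ∑ Φ : Formula n m k, ∑ i, f (encode Φ) i ^ 2)) := by
            rw [Finset.sum_mul]
            apply Finset.sum_congr rfl; intro a _
            rw [Finset.sum_mul]
        _ ≤ ∑ a : Fin m, ∑ b : Fin k, ((Fintype.card (Formula n m k) : ℝ) *
              ∑ Φ : Formula n m k, ∑ L : Fin n × Bool,
                ∑ i : Fin n, (f (encode Φ) i - f (encode (updLit Φ a b L)) i)^2) :=
            Finset.sum_le_sum fun a _ => Finset.sum_le_sum fun b _ => hMark a b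
        _ = (Fintype.card (Formula n m k) : ℝ) *
              ∑ a : Fin m, ∑ b : Fin k, ∑ Φ : Formula n m k, ∑ L : Fin n × Bool,
                ∑ i : Fin n, (f (encode Φ) i - f (encode (updLit Φ a b L)) i)^2 := by
            rw [Finset.mul_sum]
            apply Finset.sum_congr rfl; intro a _
            rw [Finset.mul_sum]
        _ ≤ (Fintype.card (Formula n m k) : ℝ) *
              (2 * (D:ℝ) * (Fintype.card (Fin n × Bool) : ℝ) *
                (∑ Φ : Formula n m k, ∑ i, f (encode Φ) i ^ 2)) :=
            mul_le_mul_of_nonneg_left hTotal hCf.le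
    have hPc : (∑ a : Fin m, ∑ b : Fin k, ∑ Φ : Formula n m k, ∑ L : Fin n × Bool,
          if L ≠ Φ a b ∧ cBad f c Φ (updLit Φ a b L) then (1:ℝ) else 0) * c
        ≤ 2 * (D:ℝ) * (Fintype.card (Fin n × Bool) : ℝ) *
            (Fintype.card (Formula n m k) : ℝ) := by
      have h1 : ((∑ a : Fin m, ∑ b : Fin k, ∑ Φ : Formula n m k, ∑ L : Fin n × Bool,
            if L ≠ Φ a b ∧ cBad f c Φ (updLit Φ a b L) then (1:ℝ) else 0) * c)
              * (∑ Φ : Formula n m k, ∑ i, f (encode Φ) i ^ 2)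
          ≤ (2 * (D:ℝ) * (Fintype.card (Fin n × Bool) : ℝ) *
              (Fintype.card (Formula n m k) : ℝ))
              * (∑ Φ : Formula n m k, ∑ i, f (encode Φ) i ^ 2) := by
        calc ((∑ a : Fin m, ∑ b : Fin k, ∑ Φ : Formula n m k, ∑ L : Fin n × Bool,
              if L ≠ Φ a b ∧ cBad f c Φ (updLit Φ a b L) then (1:ℝ) else 0) * c)
                * (∑ Φ : Formula n m k, ∑ i, f (encode Φ) i ^ 2)
            = (∑ a : Fin m, ∑ b : Fin k, ∑ Φ : Formula n m k, ∑ L : Fin n × Bool,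
               if L ≠ Φ a b ∧ cBad f c Φ (updLit Φ a b L) then (1:ℝ) else 0)
                * (c * ∑ Φ : Formula n m k, ∑ i, f (encode Φ) i ^ 2) := by ring
          _ ≤ (Fintype.card (Formula n m k) : ℝ) *
                (2 * (D:ℝ) * (Fintype.card (Fin n × Bool) : ℝ) *
                  (∑ Φ : Formula n m k, ∑ i, f (encode Φ) i ^ 2)) := hPm
          _ = (2 * (D:ℝ) * (Fintype.card (Fin n × Bool) : ℝ) *
                (Fintype.card (Formula n m k) : ℝ))
                * (∑ Φ : Formula n m k, ∑ i, f (encode Φ) i ^ 2) := by ring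
      exact le_of_mul_le_mul_right h1 hSQpos
    have hCS : (Fintype.card (Fin n × Bool) : ℝ) = 2 * (n:ℝ) := by
      rw [Fintype.card_prod, Fintype.card_bool, Fintype.card_fin]
      push_cast
      ring
    rw [hCS] at hPc
    rw [hsum_div, div_le_div_iff₀ hden hc]
    nlinarith [hPc, mul_nonneg (mul_nonneg (by positivity : (0:ℝ) ≤ 4 * (D:ℝ)) hCf.le)
      (sub_nonneg.mpr hn1)]
end

section
/- Let Σ be a finite set with |Σ| ≥ 2 and let J, T be positive integers. Consider the graph on vertex set Σ^J in which two tuples are adjacent iff they differ in exactly one coordinate; each edge has a direction j ∈ [J], the coordinate on which its endpoints differ. Let an arbitrary set of edges be designated bad, and for j ∈ [J] let λ_j be the probability that (v,w) is a bad edge when v ~ unif(Σ^J) and w is obtained from v by resampling coordinate j from unif(Σ∖{v_j}). Let σ : [T] → [J] be an arbitrary map, and let v^(0),…,v^(T) be the lazy random walk in which v^(0) ~ unif(Σ^J) and, for 1 ≤ t ≤ T, v^(t) is obtained from v^(t−1) by resampling coordinate σ(t) from unif(Σ). Then the probability that no step of the walk traverses a bad edge is at least |Σ|^{−Σ_{t=1}^T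 λ_{σ(t)}} (a step with v^(t) = v^(t−1) traverses no edge). -/
open MeasureTheory Finset Filter ProbabilityTheory

universe u

namespace RWalk

open Finset

variable {S : Type u} [Fintype S] {J : ℕ}

section Defs

variable (B : (Fin J → S) → (Fin J → S) → Prop)

open Classical in
noncomputable def bad (j : Fin J) (v : Fin J → S) : ℕ :=
  (Finset.univ.filter (fun s : S => s ≠ v j ∧ B v (Function.update v j s))).card

open Classical in
noncomputable def qstep (j : Fin J) (v : Fin J → S) (s : S) : Fin J → S :=
  if B v (Function.update v j s) then v else Function.update v j s

def stayP (j : Fin J) (v : Fin J → S) (s : S) : Prop :=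
  s = v j ∨ B v (Function.update v j s)

open Classical in
noncomputable def sw (j : Fin J) (v : Fin J → S) (s : S) : ℝ :=
  if stayP B j v s then (((1 + bad B j v : ℕ) : ℝ))⁻¹ else 1

open Classical in
noncomputable def cst (j : Fin J) (v : Fin J → S) (s : S) : ℝ :=
  if stayP B j v s then Real.log ((1 + bad B j v : ℕ) : ℝ) else 0

noncomputable def Wp : (n : ℕ) → (ℕ → Fin J) → (Fin J → S) → (Fin n → S) → ℝ
  | 0, _, _, _ => 1
  | n+1, d, v, u =>
      sw B (d 0) v (u 0) *
        Wp n (fun i => d (i+1)) (qstep B (d 0) v (u 0)) (fun i => u i.succ)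

noncomputable def Cost : (n : ℕ) → (ℕ → Fin J) → (Fin J → S) → (Fin n → S) → ℝ
  | 0, _, _, _ => 0
  | n+1, d, v, u =>
      cst B (d 0) v (u 0) +
        Cost n (fun i => d (i+1)) (qstep B (d 0) v (u 0)) (fun i => u i.succ)

open Classical in
noncomputable def Gd : (n : ℕ) → (ℕ → Fin J) → (Fin J → S) → (Fin n → S) → ℝ
  | 0, _, _, _ => 1
  | n+1, d, v, u =>
      (if u 0 = v (d 0) ∨ ¬ B v (Function.update v (d 0) (u 0)) then (1:ℝ) else 0) *
        Gd n (fun i => d (i+1)) (Function.update v (d 0) (u 0)) (fun i => u i.succ)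

end Defs

lemma sum_pi_succ {n : ℕ} (f : (Fin (n+1) → S) → ℝ) :
    ∑ u : Fin (n+1) → S, f u = ∑ s : S, ∑ u : Fin n → S, f (Fin.cons s u) := by
  rw [← Equiv.sum_comp (Fin.consEquiv fun _ => S) f, Fintype.sum_prod_type]
  rfl

section Lems

variable (B : (Fin J → S) → (Fin J → S) → Prop)

open Classical in
lemma card_stay (j : Fin J) (v : Fin J → S) :
    (Finset.univ.filter (fun s : S => stayP B j v s)).card = 1 + bad B j v := by
  classical
  have h : (Finset.univ.filter (fun s : S => stayP B j v s)) =
      insert (v j) (Finset.univ.filter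
        (fun s : S => s ≠ v j ∧ B v (Function.update v j s))) := by
    ext s
    simp only [Finset.mem_filter, Finset.mem_univ, true_and, Finset.mem_insert]
    simp only [stayP]
    by_cases hs : s = v j <;> tauto
  rw [h, Finset.card_insert_of_notMem (by simp), bad]
  · omega

lemma bad_le (j : Fin J) (v : Fin J → S) : bad B j v ≤ Fintype.card S - 1 := by
  classical
  have h1 : (Finset.univ.filter
      (fun s : S => s ≠ v j ∧ B v (Function.update v j s))) ⊆ Finset.univ.erase (v j) := by
    intro s hs
    simp only [Finset.mem_filter] at hs
    exact Finset.mem_erase.2 ⟨hs.2.1, Finset.mem_univ s⟩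
  have := Finset.card_le_card h1
  rw [Finset.card_erase_of_mem (Finset.mem_univ _), Finset.card_univ] at this
  rw [bad]
  convert this using 2

end Lems

end RWalk
namespace RWalk
open Finset
variable {S : Type u} [Fintype S] {J : ℕ}
variable (B : (Fin J → S) → (Fin J → S) → Prop)

set_option linter.unusedSectionVars false

lemma qstep_stay {j : Fin J} {v : Fin J → S} {s : S} (h : stayP B j v s) :
    qstep B j v s = v := by
  classical
  rcases h with h | h
  · subst h
    rw [qstep, Function.update_eq_self, ite_self]
  · rw [qstep, if_pos h]

lemma qstep_move {j : Fin J} {v : Fin J → S} {s : S} (h : ¬ stayP B j v s) :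
    qstep B j v s = Function.update v j s := by
  classical
  rw [stayP, not_or] at h
  rw [qstep, if_neg h.2]

lemma one_add_bad_pos : (0:ℝ) < ((1 + bad B j v : ℕ) : ℝ) := by positivity

open Classical in
lemma step_identity (j : Fin J) (v : Fin J → S) (g : (Fin J → S) → ℝ) :
    ∑ s : S, sw B j v s * g (qstep B j v s)
      = ∑ s : S, (if s = v j ∨ ¬ B v (Function.update v j s) then (1:ℝ) else 0) *
          g (Function.update v j s) := by
  classical
  rw [← Finset.sum_filter_add_sum_filter_not Finset.univ (fun s => stayP B j v s)
      (fun s => sw B j v s * g (qstep B j v s)),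
    ← Finset.sum_filter_add_sum_filter_not Finset.univ (fun s => stayP B j v s)
      (fun s => (if s = v j ∨ ¬ B v (Function.update v j s) then (1:ℝ) else 0) *
          g (Function.update v j s))]
  congr 1
  · -- stay part : both equal g v
    have hL : ∑ s ∈ Finset.univ.filter (fun s : S => stayP B j v s),
        sw B j v s * g (qstep B j v s)
        = ∑ s ∈ Finset.univ.filter (fun s : S => stayP B j v s),
            (((1 + bad B j v : ℕ) : ℝ))⁻¹ * g v := by
      refine Finset.sum_congr rfl fun s hs => ?_
      rw [Finset.mem_filter] at hs
      rw [qstep_stay B hs.2, sw, if_pos hs.2]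
    have hR : ∑ s ∈ Finset.univ.filter (fun s : S => stayP B j v s),
        (if s = v j ∨ ¬ B v (Function.update v j s) then (1:ℝ) else 0) *
          g (Function.update v j s)
        = ∑ s ∈ Finset.univ.filter (fun s : S => stayP B j v s),
            (if s = v j then g v else 0) := by
      refine Finset.sum_congr rfl fun s hs => ?_
      rw [Finset.mem_filter] at hs
      by_cases h : s = v j
      · subst h
        rw [if_pos (Or.inl rfl), if_pos rfl, Function.update_eq_self, one_mul]
      · have hb : B v (Function.update v j s) := hs.2.resolve_left h
        rw [if_neg (by tauto), if_neg h, zero_mul]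
    rw [hL, hR, Finset.sum_const, card_stay, Finset.sum_ite_eq']
    · rw [if_pos (by rw [Finset.mem_filter]; exact ⟨Finset.mem_univ _, Or.inl rfl⟩)]
      rw [nsmul_eq_mul, ← mul_assoc]
      rw [mul_inv_cancel₀ (by positivity), one_mul]
  · refine Finset.sum_congr rfl fun s hs => ?_
    rw [Finset.mem_filter] at hs
    have h := hs.2
    rw [stayP, not_or] at h
    rw [qstep_move B (by rw [stayP]; tauto), sw, if_neg (by rw [stayP]; tauto),
      if_pos (Or.inr h.2), one_mul]

end RWalk
namespace RWalk
open Finset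
set_option linter.unusedSectionVars false
variable {S : Type u} [Fintype S] {J : ℕ}
variable (B : (Fin J → S) → (Fin J → S) → Prop)

open Classical in
noncomputable def Emap (j : Fin J) : (Fin J → S) × S → (Fin J → S) × S :=
  fun p => if stayP B j p.1 p.2 then p
           else (Function.update p.1 j p.2, p.1 j)

lemma qstep_Emap (hB : ∀ v w, B v w → B w v) (j : Fin J) (p : (Fin J → S) × S) :
    qstep B j (Emap B j p).1 (Emap B j p).2 = p.1 := by
  classical
  rw [Emap]
  by_cases h : stayP B j p.1 p.2
  · rw [if_pos h]
    exact qstep_stay B h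
  · rw [if_neg h]
    have h' := h
    rw [stayP, not_or] at h'
    have hupd : Function.update (Function.update p.1 j p.2) j (p.1 j) = p.1 := by
      rw [Function.update_idem, Function.update_eq_self]
    have hnb : ¬ B (Function.update p.1 j p.2) (Function.update (Function.update p.1 j p.2) j (p.1 j)) := by
      rw [hupd]
      intro hc
      exact h'.2 (hB _ _ hc)
    rw [qstep, if_neg hnb, hupd]

lemma Emap_bij (hB : ∀ v w, B v w → B w v) (j : Fin J) :
    Function.Bijective (Emap B j) := by
  classical
  rw [← Finite.injective_iff_bijective]
  intro p p' hpp
  have h1 : p.1 = p'.1 := by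
    rw [← qstep_Emap B hB j p, ← qstep_Emap B hB j p', hpp]
  obtain ⟨w, c⟩ := p
  obtain ⟨w', c'⟩ := p'
  simp only at h1
  subst h1
  rw [Emap, Emap] at hpp
  by_cases hc : stayP B j w c <;> by_cases hc' : stayP B j w c'
  · rwa [if_pos hc, if_pos hc'] at hpp
  · rw [if_pos hc, if_neg hc'] at hpp
    have hw : w = Function.update w j c' := congrArg Prod.fst hpp
    have : w j = c' := by
      conv_lhs => rw [hw]
      simp
    rw [stayP, not_or] at hc'
    exact absurd this.symm hc'.1
  · rw [if_neg hc, if_pos hc'] at hpp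
    have hw : Function.update w j c = w := congrArg Prod.fst hpp
    have : c = w j := by
      conv_rhs => rw [← hw]
      simp
    rw [stayP, not_or] at hc
    exact absurd this hc.1
  · rw [if_neg hc, if_neg hc'] at hpp
    have hw : Function.update w j c = Function.update w j c' := congrArg Prod.fst hpp
    have : c = c' := by
      have := congrFun hw j
      simpa using this
    rw [this]

lemma sum_qstep (hB : ∀ v w, B v w → B w v) (j : Fin J) (h : (Fin J → S) → ℝ) :
    ∑ p : (Fin J → S) × S, h (qstep B j p.1 p.2)
      = (Fintype.card S : ℝ) * ∑ w : Fin J → S, h w := by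
  classical
  have := Function.Bijective.sum_comp (Emap_bij B hB j)
    (fun p : (Fin J → S) × S => h (qstep B j p.1 p.2))
  rw [← this]
  have : ∀ p : (Fin J → S) × S,
      h (qstep B j (Emap B j p).1 (Emap B j p).2) = h p.1 := fun p => by
    rw [qstep_Emap B hB j p]
  simp only [this]
  rw [Fintype.sum_prod_type]
  simp [Finset.sum_const, Finset.card_univ, mul_comm, mul_sum]

lemma Wp_cons (n : ℕ) (d : ℕ → Fin J) (v : Fin J → S) (s : S) (u : Fin n → S) :
    Wp B (n+1) d v (Fin.cons s u) =
      sw B (d 0) v s * Wp B n (fun i => d (i+1)) (qstep B (d 0) v s) u := by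
  simp only [Wp, Fin.cons_zero, Fin.cons_succ]

open Classical in
lemma Gd_cons (n : ℕ) (d : ℕ → Fin J) (v : Fin J → S) (s : S) (u : Fin n → S) :
    Gd B (n+1) d v (Fin.cons s u) =
      (if s = v (d 0) ∨ ¬ B v (Function.update v (d 0) s) then (1:ℝ) else 0) *
        Gd B n (fun i => d (i+1)) (Function.update v (d 0) s) u := by
  simp only [Gd, Fin.cons_zero, Fin.cons_succ]

lemma Cost_cons (n : ℕ) (d : ℕ → Fin J) (v : Fin J → S) (s : S) (u : Fin n → S) :
    Cost B (n+1) d v (Fin.cons s u) =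
      cst B (d 0) v s + Cost B n (fun i => d (i+1)) (qstep B (d 0) v s) u := by
  simp only [Cost, Fin.cons_zero, Fin.cons_succ]

open Classical in
lemma sum_Wp_eq_sum_Gd : ∀ (n : ℕ) (d : ℕ → Fin J) (v : Fin J → S),
    ∑ u : Fin n → S, Wp B n d v u = ∑ u : Fin n → S, Gd B n d v u := by
  intro n
  induction n with
  | zero => intro d v; simp [Wp, Gd]
  | succ n ih =>
    intro d v
    rw [sum_pi_succ (f := fun u => Wp B (n+1) d v u),
        sum_pi_succ (f := fun u => Gd B (n+1) d v u)]
    simp only [Wp_cons, Gd_cons]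
    trans (∑ s : S, sw B (d 0) v s *
        ∑ u : Fin n → S, Gd B n (fun i => d (i+1)) (qstep B (d 0) v s) u)
    · simp only [← Finset.mul_sum, ih]
    rw [step_identity B (d 0) v
        (fun w => ∑ u : Fin n → S, Gd B n (fun i => d (i+1)) w u)]
    simp only [Finset.mul_sum]

end RWalk
namespace RWalk
open Finset
set_option linter.unusedSectionVars false
variable {S : Type u} [Fintype S] {J : ℕ}
variable (B : (Fin J → S) → (Fin J → S) → Prop)

lemma Wp_eq_exp : ∀ (n : ℕ) (d : ℕ → Fin J) (v : Fin J → S) (u : Fin n → S),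
    Wp B n d v u = Real.exp (-(Cost B n d v u)) := by
  intro n
  induction n with
  | zero => intro d v u; simp [Wp, Cost]
  | succ n ih =>
    intro d v u
    rw [Wp, Cost, ih, neg_add, Real.exp_add]
    congr 1
    rw [sw, cst]
    classical
    by_cases h : stayP B (d 0) v (u 0)
    · rw [if_pos h, if_pos h, ← Real.exp_log (x := (((1 + bad B (d 0) v : ℕ) : ℝ))⁻¹) (by positivity),
        Real.log_inv]
    · rw [if_neg h, if_neg h, neg_zero, Real.exp_zero]

noncomputable def ctot (j : Fin J) : ℝ :=
  ∑ v : Fin J → S, ((1 + bad B j v : ℕ) : ℝ) * Real.log ((1 + bad B j v : ℕ) : ℝ)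

lemma sum_cst (j : Fin J) (v : Fin J → S) :
    ∑ s : S, cst B j v s
      = ((1 + bad B j v : ℕ) : ℝ) * Real.log ((1 + bad B j v : ℕ) : ℝ) := by
  classical
  rw [← Finset.sum_filter_add_sum_filter_not Finset.univ (fun s => stayP B j v s)
      (fun s => cst B j v s)]
  have h1 : ∑ s ∈ Finset.univ.filter (fun s : S => stayP B j v s), cst B j v s
      = ∑ s ∈ Finset.univ.filter (fun s : S => stayP B j v s),
          Real.log ((1 + bad B j v : ℕ) : ℝ) := by
    refine Finset.sum_congr rfl fun s hs => ?_
    rw [Finset.mem_filter] at hs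
    rw [cst, if_pos hs.2]
  have h2 : ∑ s ∈ Finset.univ.filter (fun s : S => ¬ stayP B j v s), cst B j v s = 0 := by
    refine Finset.sum_eq_zero fun s hs => ?_
    rw [Finset.mem_filter] at hs
    rw [cst, if_neg hs.2]
  rw [h1, h2, Finset.sum_const, card_stay, add_zero, nsmul_eq_mul]

lemma sum_Cost (hB : ∀ v w, B v w → B w v) :
    ∀ (n : ℕ) (d : ℕ → Fin J),
    ∑ v : Fin J → S, ∑ u : Fin n → S, Cost B n d v u
      = ∑ i ∈ Finset.range n, ((Fintype.card S : ℝ) ^ (n-1)) * ctot B (d i) := by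
  intro n
  induction n with
  | zero => intro d; simp [Cost]
  | succ n ih =>
    intro d
    have key : ∀ v : Fin J → S,
        ∑ u : Fin (n+1) → S, Cost B (n+1) d v u
        = ∑ s : S, ((Fintype.card S : ℝ) ^ n * cst B (d 0) v s
            + ∑ u : Fin n → S, Cost B n (fun i => d (i+1)) (qstep B (d 0) v s) u) := by
      intro v
      rw [sum_pi_succ (f := fun u => Cost B (n+1) d v u)]
      refine Finset.sum_congr rfl fun s _ => ?_
      simp only [Cost_cons]
      rw [Finset.sum_add_distrib, Finset.sum_const, Finset.card_univ, nsmul_eq_mul]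
      congr 2
      rw [Fintype.card_fun]
      push_cast
      simp
    simp only [key]
    rw [Finset.sum_comm]
    rw [Finset.sum_comm]
    simp only [Finset.sum_add_distrib]
    have hA : ∑ v : Fin J → S, ∑ s : S, (Fintype.card S : ℝ) ^ n * cst B (d 0) v s
        = (Fintype.card S : ℝ) ^ n * ctot B (d 0) := by
      rw [ctot, Finset.mul_sum]
      refine Finset.sum_congr rfl fun v _ => ?_
      rw [← Finset.mul_sum, sum_cst]
    have hC : ∑ v : Fin J → S, ∑ s : S,
        (∑ u : Fin n → S, Cost B n (fun i => d (i+1)) (qstep B (d 0) v s) u)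
        = (Fintype.card S : ℝ) *
            ∑ w : Fin J → S, ∑ u : Fin n → S, Cost B n (fun i => d (i+1)) w u := by
      have h := sum_qstep B hB (d 0)
        (fun w => ∑ u : Fin n → S, Cost B n (fun i => d (i+1)) w u)
      rw [Fintype.sum_prod_type] at h
      exact h
    rw [hA, hC, ih, Finset.sum_range_succ', Nat.add_sub_cancel]
    rcases n with _ | m
    · simp
    · rw [Finset.mul_sum]
      rw [add_comm]
      congr 1
      refine Finset.sum_congr rfl fun i _ => ?_
      rw [← mul_assoc, Nat.add_sub_cancel, ← pow_succ']

end RWalk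
namespace RWalk
open Finset
set_option linter.unusedSectionVars false
variable {S : Type u} [Fintype S] {J : ℕ}
variable (B : (Fin J → S) → (Fin J → S) → Prop)

lemma walk_succ {T : ℕ} (v0 : Fin J → S) (σ : ℕ → Fin J) (u : Fin T → S)
    (t : ℕ) (h : t < T) :
    walk v0 σ u (t+1) = Function.update (walk v0 σ u t) (σ (t+1)) (u ⟨t, h⟩) := by
  rw [walk, dif_pos h]

lemma walk_shift {T : ℕ} (v0 : Fin J → S) (σ : ℕ → Fin J) (u : Fin (T+1) → S) :
    ∀ t, t ≤ T →
      walk (Function.update v0 (σ 1) (u 0)) (fun i => σ (i+1))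
        (fun i : Fin T => u i.succ) t = walk v0 σ u (t+1) := by
  intro t
  induction t with
  | zero =>
    intro _
    rw [walk_succ v0 σ u 0 (by omega)]
    have h0 : (⟨0, by omega⟩ : Fin (T+1)) = 0 := by
      ext
      simp
    rw [h0]
    rfl
  | succ t ih =>
    intro ht
    rw [walk_succ _ _ _ t (by omega : t < T),
        walk_succ v0 σ u (t+1) (by omega : t + 1 < T + 1), ih (by omega)]
    congr 1

open Classical in
lemma bridge : ∀ (T : ℕ) (σ : ℕ → Fin J) (v0 : Fin J → S) (u : Fin T → S),
    Gd B T (fun i => σ (i+1)) v0 u =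
      if (∀ t, 1 ≤ t → t ≤ T →
          (walk v0 σ u t = walk v0 σ u (t-1) ∨
           ¬ B (walk v0 σ u (t-1)) (walk v0 σ u t))) then (1:ℝ) else 0 := by
  intro T
  induction T with
  | zero =>
    intro σ v0 u
    rw [Gd, if_pos]
    intro t h1 h0
    omega
  | succ T ih =>
    intro σ v0 u
    have hw1 : walk v0 σ u 1 = Function.update v0 (σ 1) (u 0) := by
      rw [walk_succ v0 σ u 0 (by omega)]
      have h0 : (⟨0, by omega⟩ : Fin (T+1)) = 0 := by
        ext
        simp
      rw [h0]
      rfl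
    have hsh := walk_shift v0 σ u
    rw [Gd]
    simp only [Nat.zero_add]
    have ihh := ih (fun i => σ (i+1)) (Function.update v0 (σ 1) (u 0))
      (fun i : Fin T => u i.succ)
    rw [ihh]
    set Q : ℕ → Prop := fun t =>
      (walk v0 σ u t = walk v0 σ u (t-1) ∨
       ¬ B (walk v0 σ u (t-1)) (walk v0 σ u t)) with hQ
    have hcond : (∀ t, 1 ≤ t → t ≤ T →
        (walk (Function.update v0 (σ 1) (u 0)) (fun i => σ (i+1))
            (fun i : Fin T => u i.succ) t =
         walk (Function.update v0 (σ 1) (u 0)) (fun i => σ (i+1))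
            (fun i : Fin T => u i.succ) (t-1) ∨
         ¬ B (walk (Function.update v0 (σ 1) (u 0)) (fun i => σ (i+1))
            (fun i : Fin T => u i.succ) (t-1))
            (walk (Function.update v0 (σ 1) (u 0)) (fun i => σ (i+1))
            (fun i : Fin T => u i.succ) t)))
        ↔ (∀ t, 2 ≤ t → t ≤ T + 1 → Q t) := by
      constructor
      · intro h t h2 hT
        have h' := h (t-1) (by omega) (by omega)
        rw [hsh (t-1) (by omega), hsh (t-1-1) (by omega)] at h'
        have e1 : t - 1 + 1 = t := by omega
        have e2 : t - 1 - 1 + 1 = t - 1 := by omega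
        rw [e1, e2] at h'
        exact h'
      · intro h t h1 hT
        have h' := h (t+1) (by omega) (by omega)
        rw [hQ] at h'
        simp only [Nat.add_sub_cancel] at h'
        have e : t - 1 + 1 = t := by omega
        rw [hsh t (by omega), hsh (t-1) (by omega), e]
        exact h'
    have hP1 : (u 0 = v0 (σ 1) ∨ ¬ B v0 (Function.update v0 (σ 1) (u 0))) ↔ Q 1 := by
      rw [hQ]
      show _ ↔ (walk v0 σ u 1 = walk v0 σ u 0 ∨
        ¬ B (walk v0 σ u 0) (walk v0 σ u 1))
      rw [hw1]
      show _ ↔ (Function.update v0 (σ 1) (u 0) = v0 ∨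
        ¬ B v0 (Function.update v0 (σ 1) (u 0)))
      rw [Function.update_eq_self_iff]
    by_cases hC : ∀ t, 1 ≤ t → t ≤ T + 1 → Q t
    · rw [if_pos hC, if_pos (hP1.2 (hC 1 le_rfl (by omega))),
        if_pos (hcond.2 fun t h2 hT => hC t (by omega) hT), one_mul]
    · rw [if_neg hC]
      by_cases hP : u 0 = v0 (σ 1) ∨ ¬ B v0 (Function.update v0 (σ 1) (u 0))
      · rw [if_pos hP, one_mul, if_neg]
        intro hA
        refine hC fun t h1 hT => ?_
        rcases Nat.lt_or_ge t 2 with h | h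
        · have : t = 1 := by omega
          subst this
          exact hP1.1 hP
        · exact (hcond.1 hA) t h hT
      · have h1 : ¬ Q 1 := fun hq => hP (hP1.mpr hq)
        have hnC : ¬ ∀ t, 1 ≤ t → t ≤ T + 1 → Q t :=
          fun hCC => h1 (hCC 1 le_rfl (by omega))
        rw [if_neg hP, zero_mul]

end RWalk
namespace RWalk
open Finset
set_option linter.unusedSectionVars false

lemma mul_log_le {q x : ℝ} (hq : 2 ≤ q) (hx0 : 0 ≤ x) (hxq : x ≤ q - 1) :
    (1 + x) * Real.log (1 + x) ≤ q * Real.log q * (x / (q - 1)) := by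
  have hq1 : (0:ℝ) < q - 1 := by linarith
  set t : ℝ := x / (q - 1) with ht
  have ht0 : 0 ≤ t := by positivity
  have ht1 : t ≤ 1 := by
    rw [ht, div_le_one hq1]
    linarith
  have key := Real.convexOn_mul_log.2 (Set.mem_Ici.2 (by norm_num : (0:ℝ) ≤ 1))
    (Set.mem_Ici.2 (by linarith : (0:ℝ) ≤ q)) (by linarith : (0:ℝ) ≤ 1 - t) ht0
    (by ring)
  simp only [smul_eq_mul, mul_one, one_mul, Real.log_one, mul_zero, zero_add] at key
  have harg : 1 - t + t * q = 1 + x := by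
    rw [ht]
    field_simp
    ring
  rw [harg] at key
  refine key.trans ?_
  rw [ht]
  ring_nf
  exact le_rfl

variable {S : Type u} [Fintype S] {J : ℕ}
variable (B : (Fin J → S) → (Fin J → S) → Prop)

open Classical in
lemma sum_bad_eq (hS : 2 ≤ Fintype.card S) (j : Fin J) :
    ∑ v : Fin J → S, ((bad B j v : ℕ) : ℝ)
      = lambdaDir B j * ((Fintype.card (Fin J → S) : ℝ) * ((Fintype.card S : ℝ) - 1)) := by
  have hq : (0:ℝ) < (Fintype.card S : ℝ) - 1 := by
    have : (2:ℝ) ≤ (Fintype.card S : ℝ) := by exact_mod_cast hS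
    linarith
  have hN : (0:ℝ) < (Fintype.card (Fin J → S) : ℝ) := by
    have : Nonempty S := Fintype.card_pos_iff.mp (by omega)
    exact_mod_cast Fintype.card_pos
  rw [lambdaDir, div_mul_cancel₀ _ (by positivity)]
  refine Finset.sum_congr rfl fun v _ => ?_
  rw [bad]
  exact Finset.natCast_card_filter _ _

lemma ctot_le (hS : 2 ≤ Fintype.card S) (j : Fin J) :
    ctot B j ≤ (Fintype.card S : ℝ) * (Fintype.card (Fin J → S) : ℝ) *
      Real.log (Fintype.card S : ℝ) * lambdaDir B j := by
  have hq2 : (2:ℝ) ≤ (Fintype.card S : ℝ) := by exact_mod_cast hS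
  have hq1 : (0:ℝ) < (Fintype.card S : ℝ) - 1 := by linarith
  have step : ∀ v : Fin J → S,
      ((1 + bad B j v : ℕ) : ℝ) * Real.log ((1 + bad B j v : ℕ) : ℝ)
        ≤ (Fintype.card S : ℝ) * Real.log (Fintype.card S : ℝ) *
            (((bad B j v : ℕ) : ℝ) / ((Fintype.card S : ℝ) - 1)) := by
    intro v
    have hb : ((bad B j v : ℕ) : ℝ) ≤ (Fintype.card S : ℝ) - 1 := by
      have h1 := bad_le B j v
      have h2 : ((bad B j v : ℕ) : ℝ) ≤ ((Fintype.card S - 1 : ℕ) : ℝ) := by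
        exact_mod_cast h1
      refine h2.trans ?_
      have : ((Fintype.card S - 1 : ℕ) : ℝ) = (Fintype.card S : ℝ) - 1 := by
        have h3 : 1 ≤ Fintype.card S := by omega
        push_cast [h3]
        ring
      rw [this]
    have := mul_log_le hq2 (by positivity : (0:ℝ) ≤ ((bad B j v : ℕ) : ℝ)) hb
    calc ((1 + bad B j v : ℕ) : ℝ) * Real.log ((1 + bad B j v : ℕ) : ℝ)
        = (1 + ((bad B j v : ℕ) : ℝ)) * Real.log (1 + ((bad B j v : ℕ) : ℝ)) := by
          push_cast
          ring_nf
      _ ≤ _ := this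
  calc ctot B j ≤ ∑ v : Fin J → S, (Fintype.card S : ℝ) * Real.log (Fintype.card S : ℝ) *
        (((bad B j v : ℕ) : ℝ) / ((Fintype.card S : ℝ) - 1)) := by
        rw [ctot]
        exact Finset.sum_le_sum fun v _ => step v
    _ = (Fintype.card S : ℝ) * Real.log (Fintype.card S : ℝ) / ((Fintype.card S : ℝ) - 1) *
          ∑ v : Fin J → S, ((bad B j v : ℕ) : ℝ) := by
        rw [Finset.mul_sum]
        refine Finset.sum_congr rfl fun v _ => ?_
        ring
    _ = (Fintype.card S : ℝ) * (Fintype.card (Fin J → S) : ℝ) *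
          Real.log (Fintype.card S : ℝ) * lambdaDir B j := by
        rw [sum_bad_eq B hS j]
        field_simp

lemma jensen_exp {ι : Type*} [Fintype ι] [Nonempty ι] (f : ι → ℝ) :
    Real.exp ((∑ i : ι, f i) / (Fintype.card ι : ℝ))
      ≤ (∑ i : ι, Real.exp (f i)) / (Fintype.card ι : ℝ) := by
  have hc : (0:ℝ) < (Fintype.card ι : ℝ) := by
    exact_mod_cast Fintype.card_pos
  have key := convexOn_exp.map_sum_le (t := Finset.univ)
    (w := fun _ : ι => ((Fintype.card ι : ℝ))⁻¹) (p := f)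
    (fun _ _ => by positivity)
    (by rw [Finset.sum_const, Finset.card_univ, nsmul_eq_mul, mul_inv_cancel₀ hc.ne'])
    (fun _ _ => Set.mem_univ _)
  have h1 : ∑ i : ι, ((Fintype.card ι : ℝ))⁻¹ • f i = (∑ i : ι, f i) / (Fintype.card ι : ℝ) := by
    rw [← Finset.smul_sum, smul_eq_mul, div_eq_inv_mul]
  have h2 : ∑ i : ι, ((Fintype.card ι : ℝ))⁻¹ • Real.exp (f i)
      = (∑ i : ι, Real.exp (f i)) / (Fintype.card ι : ℝ) := by
    rw [← Finset.smul_sum, smul_eq_mul, div_eq_inv_mul]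
  rw [h1, h2] at key
  exact key

end RWalk
namespace RWalk
open Finset
set_option linter.unusedSectionVars false
variable {S : Type u} [Fintype S] {J : ℕ}
variable (B : (Fin J → S) → (Fin J → S) → Prop)

lemma PwalkGood_eq (T : ℕ) (σ : ℕ → Fin J) :
    PwalkGood J T B σ
      = (∑ v : Fin J → S, ∑ u : Fin T → S, Gd B T (fun i => σ (i+1)) v u)
        / (Fintype.card ((Fin J → S) × (Fin T → S)) : ℝ) := by
  rw [PwalkGood, Fintype.sum_prod_type]
  congr 1
  refine Finset.sum_congr rfl fun v _ => Finset.sum_congr rfl fun u _ => ?_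
  exact (bridge B T σ v u).symm

end RWalk

theorem statement17 {S : Type u} [Fintype S] [DecidableEq S] (hS : 2 ≤ Fintype.card S)
    (J T : ℕ) (hJ : 0 < J) (hT : 0 < T)
    (B : (Fin J → S) → (Fin J → S) → Prop) (hB : ∀ v w, B v w → B w v)
    (σ : ℕ → Fin J) :
    (Fintype.card S : ℝ) ^ (-(∑ t ∈ Finset.Icc 1 T, lambdaDir B (σ t))) ≤
      PwalkGood J T B σ := by
  classical
  set d : ℕ → Fin J := fun i => σ (i+1) with hd
  have hq2 : (2:ℝ) ≤ (Fintype.card S : ℝ) := by exact_mod_cast hS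
  have hqpos : (0:ℝ) < (Fintype.card S : ℝ) := by linarith
  have hSne : Nonempty S := Fintype.card_pos_iff.mp (by omega)
  have hNpos : (0:ℝ) < (Fintype.card (Fin J → S) : ℝ) := by
    exact_mod_cast Fintype.card_pos
  set M : ℝ := (Fintype.card ((Fin J → S) × (Fin T → S)) : ℝ) with hM
  have hMpos : 0 < M := by
    rw [hM]
    exact_mod_cast Fintype.card_pos
  have hMcard : M = (Fintype.card (Fin J → S) : ℝ) * (Fintype.card S : ℝ) ^ T := by
    rw [hM]
    simp only [Fintype.card_prod, Fintype.card_fun, Fintype.card_fin]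
    push_cast
    ring
  rw [RWalk.PwalkGood_eq B T σ]
  have hWG : (∑ v : Fin J → S, ∑ u : Fin T → S, RWalk.Gd B T d v u)
      = ∑ z : (Fin J → S) × (Fin T → S), Real.exp (-(RWalk.Cost B T d z.1 z.2)) := by
    rw [Fintype.sum_prod_type]
    refine Finset.sum_congr rfl fun v _ => ?_
    rw [← RWalk.sum_Wp_eq_sum_Gd]
    exact Finset.sum_congr rfl fun u _ => RWalk.Wp_eq_exp B T d v u
  rw [hWG]
  have hJen := RWalk.jensen_exp (ι := (Fin J → S) × (Fin T → S))
    (fun z => -(RWalk.Cost B T d z.1 z.2))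
  refine le_trans ?_ hJen
  rw [Real.rpow_def_of_pos hqpos, Real.exp_le_exp]
  -- goal : log q * (-(∑ Icc λ)) ≤ (∑ z, -(Cost z)) / M
  have hC : ∑ z : (Fin J → S) × (Fin T → S), RWalk.Cost B T d z.1 z.2
      = ∑ i ∈ Finset.range T, ((Fintype.card S : ℝ) ^ (T-1)) * RWalk.ctot B (d i) := by
    rw [Fintype.sum_prod_type]
    exact RWalk.sum_Cost B hB T d
  have hL : ∑ t ∈ Finset.Icc 1 T, lambdaDir B (σ t)
      = ∑ i ∈ Finset.range T, lambdaDir B (d i) := by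
    rw [← Finset.Ico_add_one_right_eq_Icc, Finset.sum_Ico_eq_sum_range]
    refine Finset.sum_congr (by first | rfl | (congr 1; omega)) fun i _ => ?_
    simp only [hd]
    rw [Nat.add_comm 1 i]
  have hpow : (Fintype.card S : ℝ) ^ (T-1) * (Fintype.card S : ℝ)
      = (Fintype.card S : ℝ) ^ T := by
    rw [← pow_succ]
    congr 1
    omega
  have hlogq : 0 ≤ Real.log (Fintype.card S : ℝ) := Real.log_nonneg (by linarith)
  have hCb : ∑ i ∈ Finset.range T, ((Fintype.card S : ℝ) ^ (T-1)) * RWalk.ctot B (d i)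
      ≤ Real.log (Fintype.card S : ℝ) *
          (∑ i ∈ Finset.range T, lambdaDir B (d i)) * M := by
    calc ∑ i ∈ Finset.range T, ((Fintype.card S : ℝ) ^ (T-1)) * RWalk.ctot B (d i)
        ≤ ∑ i ∈ Finset.range T, ((Fintype.card S : ℝ) ^ (T-1)) *
            ((Fintype.card S : ℝ) * (Fintype.card (Fin J → S) : ℝ) *
              Real.log (Fintype.card S : ℝ) * lambdaDir B (d i)) := by
          refine Finset.sum_le_sum fun i _ => ?_
          exact mul_le_mul_of_nonneg_left (RWalk.ctot_le B hS (d i)) (by positivity)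
      _ = Real.log (Fintype.card S : ℝ) *
            (∑ i ∈ Finset.range T, lambdaDir B (d i)) * M := by
          rw [Finset.mul_sum, hMcard]
          rw [Finset.sum_mul]
          refine Finset.sum_congr rfl fun i _ => ?_
          rw [← hpow]
          ring
  have hsum_neg : ∑ z : (Fin J → S) × (Fin T → S), -(RWalk.Cost B T d z.1 z.2)
      = -(∑ z : (Fin J → S) × (Fin T → S), RWalk.Cost B T d z.1 z.2) := by
    rw [Finset.sum_neg_distrib]
  rw [hsum_neg, hC, hL, mul_neg, neg_div, neg_le_neg_iff, div_le_iff₀ hMpos]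
  exact hCb
end
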